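/- arXiv:1102.3461 — 3 statements merged into one kernel-verified Lean document; each statement's English description precedes it below -/
import Mathlib

section
/- The distributional solution of the Cauchy problem is unique: if μ and ν are both continuous maps from [0,T] to M₁([0,∞)) with μ(0) = ν(0) = λ which both satisfy the weak-form identity for every Schwartz function g and every t ∈ [0,T], then μ(t) = ν(t) for all t ∈ [0,T]. -/
open MeasureTheory Set

/-- A distributional solution of the Cauchy problem
`∂ρ/∂t = −(η/2) e^{ηt/2} m_λ ∂ρ/∂x + (1/2) e^{ηt/2} m_λ ∂²(xρ)/∂x²`, `ρ(0) = λ`: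
a continuous map `ρ : [0,T] → M₁([0,∞))` (probability measures on `ℝ` carried by `[0,∞)`,
with the topology of weak convergence) such that `ρ(0) = λ` and, for every Schwartz
function `g` and every `t ∈ [0,T]`,
`∫ g dρ(t) − ∫ g dλ = m_λ ∫₀ᵗ e^{ηs/2} [∫ ((η/2) g′(x) + (x/2) g″(x)) ρ(s)(dx)] ds`. -/
def IsDistribSol (η T mlam : ℝ) (hT : 0 ≤ T) (lam : ProbabilityMeasure ℝ)
    (ρ : C(Set.Icc (0:ℝ) T, ProbabilityMeasure ℝ)) : Prop :=
  (∀ t : Set.Icc (0:ℝ) T, (ρ t : Measure ℝ) (Set.Ici 0) = 1) ∧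
  ρ ⟨0, Set.left_mem_Icc.2 hT⟩ = lam ∧
  ∀ (g : SchwartzMap ℝ ℝ) (t : Set.Icc (0:ℝ) T),
    (∫ x, g x ∂(ρ t : Measure ℝ)) - ∫ x, g x ∂(lam : Measure ℝ)
      = mlam * ∫ s in (0:ℝ)..(t : ℝ), Real.exp (η * s / 2) *
          ∫ x, (η / 2 * deriv g x + x / 2 * deriv (deriv (⇑g)) x)
            ∂(ρ (Set.projIcc 0 T hT s) : Measure ℝ)

open scoped ContDiff

noncomputable def cutoff (x : ℝ) : ℝ := Real.smoothTransition (x + 2)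

lemma cutoff_contDiff : ContDiff ℝ ∞ cutoff := by
  have : cutoff = Real.smoothTransition ∘ (fun x : ℝ => x + 2) := rfl
  rw [this]
  exact (Real.smoothTransition.contDiff (n := (⊤:ℕ∞))).comp (contDiff_id.add contDiff_const)

lemma cutoff_one {x : ℝ} (hx : -1 ≤ x) : cutoff x = 1 :=
  Real.smoothTransition.one_of_one_le (by linarith)

lemma cutoff_zero {x : ℝ} (hx : x ≤ -2) : cutoff x = 0 :=
  Real.smoothTransition.zero_of_nonpos (by linarith)

lemma cutoff_nonneg (x : ℝ) : 0 ≤ cutoff x := Real.smoothTransition.nonneg _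

lemma cutoff_le_one (x : ℝ) : cutoff x ≤ 1 := Real.smoothTransition.le_one _

/-- The exponential-times-cutoff test function. -/
noncomputable def gfun (ξ x : ℝ) : ℝ := Real.exp (-(ξ * x)) * cutoff x

lemma gfun_contDiff (ξ : ℝ) : ContDiff ℝ ∞ (gfun ξ) := by
  apply ContDiff.mul _ cutoff_contDiff
  exact Real.contDiff_exp.comp ((contDiff_const.mul contDiff_id).neg)

lemma gfun_continuous (ξ : ℝ) : Continuous (gfun ξ) := (gfun_contDiff ξ).continuous

lemma gfun_eq_exp {ξ x : ℝ} (hx : -1 ≤ x) : gfun ξ x = Real.exp (-(ξ * x)) := by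
  rw [gfun, cutoff_one hx, mul_one]

lemma gfun_eq_zero {ξ x : ℝ} (hx : x ≤ -2) : gfun ξ x = 0 := by
  rw [gfun, cutoff_zero hx, mul_zero]

/-- Polynomial times decaying exponential bound, for nonnegative `x`. -/
lemma pow_mul_exp_le (k : ℕ) {a x : ℝ} (ha : 0 < a) (hx : 0 ≤ x) :
    x ^ k * Real.exp (-(a * x)) ≤ (k / a) ^ k := by
  rcases Nat.eq_zero_or_pos k with hk | hk
  · subst hk
    simpa using Real.exp_le_one_iff.2 (by nlinarith : -(a*x) ≤ 0)

  · have h1 : (a * x) ^ k ≤ (k : ℝ) ^ k * Real.exp (a * x) := by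
      have h2 : a * x / k ≤ Real.exp (a * x / k) := by
        have := Real.add_one_le_exp (a * x / k)
        nlinarith [div_nonneg (by positivity : (0:ℝ) ≤ a * x) (by positivity : (0:ℝ) ≤ (k:ℝ))]
      have h3 : (a * x / k) ^ k ≤ Real.exp (a * x / k) ^ k :=
        pow_le_pow_left₀ (by positivity) h2 k
      have h4 : Real.exp (a * x / k) ^ k = Real.exp (a * x) := by
        rw [← Real.exp_nat_mul]
        congr 1
        field_simp
      rw [h4] at h3
      have hkpos : (0:ℝ) < (k:ℝ) ^ k := by positivity
      calc (a * x) ^ k = (a * x / k) ^ k * (k:ℝ) ^ k := by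
            rw [div_pow]; field_simp
        _ ≤ Real.exp (a * x) * (k:ℝ) ^ k := by
            exact mul_le_mul_of_nonneg_right h3 hkpos.le
        _ = (k : ℝ) ^ k * Real.exp (a * x) := by ring
    have hxk : x ^ k = (a * x) ^ k / a ^ k := by
      rw [mul_pow]; field_simp
    rw [hxk]
    rw [div_mul_eq_mul_div, div_le_iff₀ (by positivity), div_pow, div_mul_eq_mul_div,
      le_div_iff₀ (by positivity)]
    calc (a * x) ^ k * Real.exp (-(a * x)) * a ^ k
        ≤ (k:ℝ) ^ k * Real.exp (a * x) * Real.exp (-(a * x)) * a ^ k := by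
          have h5 := Real.exp_pos (-(a * x))
          have h6 : (0:ℝ) < a ^ k := pow_pos ha k
          nlinarith [mul_le_mul_of_nonneg_right h1 h5.le]
      _ = (k:ℝ) ^ k * a ^ k := by
          rw [mul_assoc ((k:ℝ)^k), ← Real.exp_add]
          simp

/-- Master bound: `|x|^k * |gfun ζ x|` is bounded uniformly over `ζ ∈ [a, b]`. -/
lemma gfun_bound (k : ℕ) {a b : ℝ} (ha : 0 < a) :
    ∃ C : ℝ, 0 ≤ C ∧ ∀ ζ ∈ Set.Icc a b, ∀ x : ℝ, |x| ^ k * |gfun ζ x| ≤ C := by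
  refine ⟨2 ^ k * Real.exp (2 * b) + ((k : ℝ) / a) ^ k, by positivity, ?_⟩
  rintro ζ ⟨haζ, hζb⟩ x
  rcases le_or_gt x (-2) with hx | hx
  · rw [gfun_eq_zero hx]
    simp only [abs_zero, mul_zero]
    positivity
  rcases le_or_gt x 0 with hx0 | hx0
  · -- x ∈ (-2, 0]
    have h1 : |x| ≤ 2 := by rw [abs_le]; constructor <;> linarith
    have h2 : |gfun ζ x| ≤ Real.exp (2 * b) := by
      have : |gfun ζ x| = Real.exp (-(ζ * x)) * cutoff x := by
        rw [gfun]
        exact abs_of_nonneg (mul_nonneg (Real.exp_pos _).le (cutoff_nonneg x))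
      rw [this]
      calc Real.exp (-(ζ * x)) * cutoff x ≤ Real.exp (-(ζ * x)) * 1 :=
            mul_le_mul_of_nonneg_left (cutoff_le_one x) (Real.exp_pos _).le
        _ ≤ Real.exp (2 * b) := by
            rw [mul_one]
            apply Real.exp_le_exp.2
            nlinarith
    calc |x| ^ k * |gfun ζ x| ≤ 2 ^ k * Real.exp (2 * b) := by
          apply mul_le_mul (pow_le_pow_left₀ (abs_nonneg _) h1 k) h2 (abs_nonneg _)
          positivity
      _ ≤ 2 ^ k * Real.exp (2 * b) + ((k : ℝ) / a) ^ k :=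
          le_add_of_nonneg_right (by positivity)
  · -- x > 0
    have h2 : |gfun ζ x| = Real.exp (-(ζ * x)) := by
      rw [gfun_eq_exp (by linarith), abs_of_pos (Real.exp_pos _)]
    have h3 : Real.exp (-(ζ * x)) ≤ Real.exp (-(a * x)) := by
      apply Real.exp_le_exp.2; nlinarith
    have h4 : |x| ^ k * Real.exp (-(a * x)) ≤ ((k : ℝ) / a) ^ k := by
      rw [abs_of_pos hx0]
      exact pow_mul_exp_le k ha hx0.le
    have : |x| ^ k * |gfun ζ x| ≤ ((k:ℝ)/a) ^ k := by
      rw [h2]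
      calc |x| ^ k * Real.exp (-(ζ * x)) ≤ |x| ^ k * Real.exp (-(a * x)) :=
            mul_le_mul_of_nonneg_left h3 (by positivity)
        _ ≤ ((k:ℝ)/a) ^ k := h4
    have hpos : (0:ℝ) ≤ 2 ^ k * Real.exp (2*b) := by positivity
    linarith

/-- `ζ`-derivative of `exp (-(ζ * x))`. -/
lemma hasDerivAt_exp_neg_param (x ζ : ℝ) :
    HasDerivAt (fun ζ : ℝ => Real.exp (-(ζ * x))) (-x * Real.exp (-(ζ * x))) ζ := by
  have h1 : HasDerivAt (fun ζ : ℝ => -(ζ * x)) (-x) ζ := by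
    simpa [Pi.neg_def] using ((hasDerivAt_id ζ).mul_const x).neg
  simpa [mul_comm, Function.comp_def] using (Real.hasDerivAt_exp (-(ζ * x))).comp ζ h1

/-- `x`-derivative of `exp (-(ξ * x))`. -/
lemma hasDerivAt_exp_neg (ξ x : ℝ) :
    HasDerivAt (fun x : ℝ => Real.exp (-(ξ * x))) (-ξ * Real.exp (-(ξ * x))) x := by
  have h1 : HasDerivAt (fun x : ℝ => -(ξ * x)) (-ξ) x := by
    simpa [Pi.neg_def] using ((hasDerivAt_id x).const_mul ξ).neg
  simpa [mul_comm, Function.comp_def] using (Real.hasDerivAt_exp (-(ξ * x))).comp x h1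

lemma iteratedDeriv_exp_neg (ξ : ℝ) (n : ℕ) :
    iteratedDeriv n (fun x : ℝ => Real.exp (-(ξ * x)))
      = fun x => (-ξ) ^ n * Real.exp (-(ξ * x)) := by
  induction n with
  | zero => simp
  | succ n ih =>
    rw [iteratedDeriv_succ, ih]
    funext x
    have : HasDerivAt (fun x : ℝ => (-ξ) ^ n * Real.exp (-(ξ * x)))
        ((-ξ) ^ (n+1) * Real.exp (-(ξ * x))) x := by
      have := (hasDerivAt_exp_neg ξ x).const_mul ((-ξ) ^ n)
      exact this.congr_deriv (by ring)
    exact this.deriv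

lemma gfun_iteratedDeriv_right (ξ : ℝ) (n : ℕ) {x : ℝ} (hx : -1 < x) :
    ‖iteratedFDeriv ℝ n (gfun ξ) x‖ = |ξ| ^ n * Real.exp (-(ξ * x)) := by
  have hEq : gfun ξ =ᶠ[nhds x] (fun y => Real.exp (-(ξ * y))) :=
    Filter.eventuallyEq_of_mem (Ioi_mem_nhds hx) (fun y hy => gfun_eq_exp (le_of_lt hy))
  rw [norm_iteratedFDeriv_eq_norm_iteratedDeriv, hEq.iteratedDeriv_eq n,
    iteratedDeriv_exp_neg]
  rw [Real.norm_eq_abs, abs_mul, abs_pow, abs_neg, abs_of_pos (Real.exp_pos _)]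

lemma gfun_iteratedDeriv_zero (ξ : ℝ) (n : ℕ) {x : ℝ} (hx : x < -2) :
    ‖iteratedFDeriv ℝ n (gfun ξ) x‖ = 0 := by
  have hEq : gfun ξ =ᶠ[nhds x] (fun _ => (0 : ℝ)) :=
    Filter.eventuallyEq_of_mem (Iio_mem_nhds hx) (fun y hy => gfun_eq_zero (le_of_lt hy))
  rw [norm_iteratedFDeriv_eq_norm_iteratedDeriv, hEq.iteratedDeriv_eq n]
  have : iteratedDeriv n (fun _ : ℝ => (0:ℝ)) = fun _ => 0 := by
    funext y
    rw [iteratedDeriv_eq_iteratedFDeriv, iteratedFDeriv_zero_fun]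
    simp
  rw [this]
  simp

/-- The Schwartz test function `x ↦ exp(-ξ x) · cutoff x`. -/
noncomputable def gS (ξ : ℝ) (hξ : 0 < ξ) : SchwartzMap ℝ ℝ where
  toFun := gfun ξ
  smooth' := gfun_contDiff ξ
  decay' := by
    intro k n
    -- bound on the right piece
    obtain ⟨C₁, hC₁0, hC₁⟩ := gfun_bound k (a := ξ) (b := ξ) hξ
    -- bound on the compact middle piece
    have hcont : Continuous fun x => ‖iteratedFDeriv ℝ n (gfun ξ) x‖ :=
      ((gfun_contDiff ξ).continuous_iteratedFDeriv (by exact_mod_cast le_top)).norm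
    obtain ⟨C₂, hC₂⟩ := (isCompact_Icc (a := (-3:ℝ)) (b := 0)).exists_bound_of_continuousOn
      hcont.continuousOn
    refine ⟨|ξ| ^ n * C₁ + 3 ^ k * C₂ + 1, fun x => ?_⟩
    have hC₂0 : 0 ≤ C₂ := le_trans (norm_nonneg _) (hC₂ 0 (by constructor <;> norm_num))
    rcases lt_or_ge x (-2) with hx | hx
    · rw [Real.norm_eq_abs, gfun_iteratedDeriv_zero ξ n hx, mul_zero]
      positivity
    rcases le_or_gt x 0 with hx0 | hx0
    · -- middle piece
      have h1 : ‖iteratedFDeriv ℝ n (gfun ξ) x‖ ≤ C₂ := by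
        simpa using hC₂ x ⟨by linarith, hx0⟩
      have h2 : ‖x‖ ^ k ≤ 3 ^ k := by
        apply pow_le_pow_left₀ (norm_nonneg _)
        rw [Real.norm_eq_abs, abs_le]; constructor <;> linarith
      have : ‖x‖ ^ k * ‖iteratedFDeriv ℝ n (gfun ξ) x‖ ≤ 3 ^ k * C₂ :=
        mul_le_mul h2 h1 (norm_nonneg _) (by positivity)
      have h3 : (0:ℝ) ≤ |ξ| ^ n * C₁ := by positivity
      linarith
    · -- right piece
      rw [gfun_iteratedDeriv_right ξ n (by linarith)]
      have h1 : ‖x‖ ^ k * Real.exp (-(ξ * x)) ≤ C₁ := by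
        have := hC₁ ξ ⟨le_refl _, le_refl _⟩ x
        rw [gfun_eq_exp (by linarith : (-1:ℝ) ≤ x),
          abs_of_pos (Real.exp_pos _)] at this
        rwa [Real.norm_eq_abs]
      have h2 : (0:ℝ) ≤ 3 ^ k * C₂ := by positivity
      have : ‖x‖ ^ k * (|ξ| ^ n * Real.exp (-(ξ * x)))
          = |ξ| ^ n * (‖x‖ ^ k * Real.exp (-(ξ * x))) := by ring
      rw [this]
      have := mul_le_mul_of_nonneg_left h1 (by positivity : (0:ℝ) ≤ |ξ| ^ n)
      linarith

lemma gS_apply (ξ : ℝ) (hξ : 0 < ξ) (x : ℝ) : gS ξ hξ x = gfun ξ x := rfl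

lemma gfun_deriv (ξ : ℝ) {x : ℝ} (hx : -1 < x) :
    deriv (gfun ξ) x = -ξ * Real.exp (-(ξ * x)) := by
  have hEq : gfun ξ =ᶠ[nhds x] (fun y => Real.exp (-(ξ * y))) :=
    Filter.eventuallyEq_of_mem (Ioi_mem_nhds hx) (fun y hy => gfun_eq_exp (le_of_lt hy))
  rw [hEq.deriv_eq]
  exact (hasDerivAt_exp_neg ξ x).deriv

lemma gfun_deriv2 (ξ : ℝ) {x : ℝ} (hx : -1 < x) :
    deriv (deriv (gfun ξ)) x = ξ ^ 2 * Real.exp (-(ξ * x)) := by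
  have hEq : gfun ξ =ᶠ[nhds x] (fun y => Real.exp (-(ξ * y))) :=
    Filter.eventuallyEq_of_mem (Ioi_mem_nhds hx) (fun y hy => gfun_eq_exp (le_of_lt hy))
  rw [hEq.deriv.deriv_eq]
  have h1 : deriv (fun y => Real.exp (-(ξ * y))) = fun y => -ξ * Real.exp (-(ξ * y)) :=
    funext fun y => (hasDerivAt_exp_neg ξ y).deriv
  rw [h1]
  have h2 : HasDerivAt (fun y => -ξ * Real.exp (-(ξ * y)))
      (ξ ^ 2 * Real.exp (-(ξ * x))) x := by
    have := (hasDerivAt_exp_neg ξ x).const_mul (-ξ)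
    exact this.congr_deriv (by ring)
  exact h2.deriv

section MeasureHelpers

lemma integrable_of_bounded {f : ℝ → ℝ} (hf : Continuous f) {C : ℝ}
    (hC : ∀ x, |f x| ≤ C) (m : Measure ℝ) [IsProbabilityMeasure m] :
    Integrable f m := by
  let fB : BoundedContinuousFunction ℝ ℝ := BoundedContinuousFunction.ofNormedAddCommGroup f hf C
    (by simpa [Real.norm_eq_abs] using hC)
  exact fB.integrable m

lemma cont_integral_of_bounded {f : ℝ → ℝ} (hf : Continuous f) {C : ℝ}
    (hC : ∀ x, |f x| ≤ C) {ρ : ℝ → ProbabilityMeasure ℝ} (hρ : Continuous ρ) :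
    Continuous fun s => ∫ x, f x ∂(ρ s : Measure ℝ) := by
  let fB : BoundedContinuousFunction ℝ ℝ := BoundedContinuousFunction.ofNormedAddCommGroup f hf C
    (by simpa [Real.norm_eq_abs] using hC)
  exact (ProbabilityMeasure.continuous_integral_boundedContinuousFunction fB).comp hρ

lemma ae_mem_Ici_of_carried {m : Measure ℝ} [IsProbabilityMeasure m]
    (hm : m (Set.Ici 0) = 1) : ∀ᵐ x ∂m, x ∈ Set.Ici (0:ℝ) := by
  rw [ae_iff]
  have h : {x : ℝ | ¬ x ∈ Set.Ici (0:ℝ)} = (Set.Ici (0:ℝ))ᶜ := rfl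
  rw [h, measure_compl measurableSet_Ici (by simp), hm]
  simp

lemma gfun_abs_le (j : ℕ) {ξ : ℝ} (hξ : 0 < ξ) :
    ∃ C : ℝ, 0 ≤ C ∧ ∀ x : ℝ, |x ^ j * gfun ξ x| ≤ C := by
  obtain ⟨C, hC0, hC⟩ := gfun_bound j (a := ξ) (b := ξ) hξ
  refine ⟨C, hC0, fun x => ?_⟩
  have := hC ξ ⟨le_refl _, le_refl _⟩ x
  rwa [abs_mul, abs_pow]

/-- The key integral identity for the generator applied to `gfun ξ`, on measures
carried by `[0, ∞)`. -/
lemma integral_L (η ξ : ℝ) (hξ : 0 < ξ) {m : Measure ℝ} [IsProbabilityMeasure m]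
    (hm : m (Set.Ici 0) = 1) :
    ∫ x, (η / 2 * deriv (gfun ξ) x + x / 2 * deriv (deriv (gfun ξ)) x) ∂m
      = -(η * ξ / 2) * (∫ x, gfun ξ x ∂m) + ξ ^ 2 / 2 * (∫ x, x * gfun ξ x ∂m) := by
  obtain ⟨C₀, hC₀0, hC₀⟩ := gfun_abs_le 0 hξ
  obtain ⟨C₁, hC₁0, hC₁⟩ := gfun_abs_le 1 hξ
  have int₀ : Integrable (fun x => gfun ξ x) m :=
    integrable_of_bounded (gfun_continuous ξ) (fun x => by simpa using hC₀ x) m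
  have int₁ : Integrable (fun x => x * gfun ξ x) m :=
    integrable_of_bounded (continuous_id.mul (gfun_continuous ξ))
      (fun x => by simpa using hC₁ x) m
  have h1 : ∫ x, (η / 2 * deriv (gfun ξ) x + x / 2 * deriv (deriv (gfun ξ)) x) ∂m
      = ∫ x, (-(η * ξ / 2) * gfun ξ x + ξ ^ 2 / 2 * (x * gfun ξ x)) ∂m := by
    apply integral_congr_ae
    filter_upwards [ae_mem_Ici_of_carried hm] with x hx
    have hx' : (-1:ℝ) < x := lt_of_lt_of_le (by norm_num) hx
    rw [gfun_deriv ξ hx', gfun_deriv2 ξ hx', gfun_eq_exp (le_of_lt hx')]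
    ring
  rw [h1, integral_add (int₀.const_mul _) (int₁.const_mul _),
    integral_const_mul, integral_const_mul]

/-- Differentiation in the parameter `ζ` under the integral sign. -/
lemma hasDerivAt_param (j : ℕ) {ξ₀ : ℝ} (hξ₀ : 0 < ξ₀) (m : Measure ℝ)
    [IsProbabilityMeasure m] :
    HasDerivAt (fun ζ => ∫ x, x ^ j * gfun ζ x ∂m)
      (-(∫ x, x ^ (j+1) * gfun ξ₀ x ∂m)) ξ₀ := by
  obtain ⟨C, hC0, hC⟩ := gfun_bound (j+1) (a := ξ₀/2) (b := 2 * ξ₀) (by linarith)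
  have key := hasDerivAt_integral_of_dominated_loc_of_deriv_le
    (F := fun ζ x => x ^ j * gfun ζ x) (F' := fun ζ x => -(x ^ (j+1) * gfun ζ x))
    (μ := m) (x₀ := ξ₀) (bound := fun _ => C) (s := Metric.ball ξ₀ (ξ₀/2)) (Metric.ball_mem_nhds _ (by linarith))
    ?_ ?_ ?_ ?_ ?_ ?_
  · have := key.2
    simpa [integral_neg] using this
  · -- measurability
    filter_upwards with ζ
    exact ((continuous_pow j).mul (gfun_continuous ζ)).aestronglyMeasurable
  · -- integrability at ξ₀
    obtain ⟨C', _, hC'⟩ := gfun_abs_le j hξ₀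
    exact integrable_of_bounded ((continuous_pow j).mul (gfun_continuous ξ₀)) hC' m
  · -- measurability of F'
    exact (((continuous_pow (j+1)).mul (gfun_continuous ξ₀)).neg).aestronglyMeasurable
  · -- bound
    filter_upwards with x ζ hζ
    rw [Metric.mem_ball, Real.dist_eq, abs_lt] at hζ
    have hζI : ζ ∈ Set.Icc (ξ₀/2) (2*ξ₀) := ⟨by linarith, by linarith⟩
    have := hC ζ hζI x
    rw [Real.norm_eq_abs, abs_neg, abs_mul, abs_pow]
    exact this
  · exact integrable_const C
  · -- pointwise derivative
    filter_upwards with x ζ hζ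
    have h1 : HasDerivAt (fun ζ : ℝ => gfun ζ x) (-x * gfun ζ x) ζ := by
      have := (hasDerivAt_exp_neg_param x ζ).mul_const (cutoff x)
      have h2 : (fun ζ : ℝ => Real.exp (-(ζ * x)) * cutoff x) = fun ζ : ℝ => gfun ζ x := rfl
      rw [h2] at this
      exact this.congr_deriv (by rw [gfun]; ring)
    have := h1.const_mul (x ^ j)
    exact this.congr_deriv (by ring)

end MeasureHelpers

section MoreHelpers

lemma integrable_P (j : ℕ) {ζ : ℝ} (hζ : 0 < ζ) (m : Measure ℝ) [IsProbabilityMeasure m] :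
    Integrable (fun x => x ^ j * gfun ζ x) m := by
  obtain ⟨C, _, hC⟩ := gfun_abs_le j hζ
  exact integrable_of_bounded ((continuous_pow j).mul (gfun_continuous ζ)) hC m

lemma cont_P (j : ℕ) {ζ : ℝ} (hζ : 0 < ζ) {κ : ℝ → ProbabilityMeasure ℝ}
    (h : Continuous κ) :
    Continuous fun s => ∫ x, x ^ j * gfun ζ x ∂(κ s : Measure ℝ) := by
  obtain ⟨C, _, hC⟩ := gfun_abs_le j hζ
  exact cont_integral_of_bounded ((continuous_pow j).mul (gfun_continuous ζ)) hC h

lemma abs_integral_P_le (j : ℕ) {a b : ℝ} (ha : 0 < a) :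
    ∃ C : ℝ, 0 ≤ C ∧ ∀ (m : Measure ℝ), IsProbabilityMeasure m → ∀ ζ ∈ Set.Icc a b,
      |∫ x, x ^ j * gfun ζ x ∂m| ≤ C := by
  obtain ⟨C, hC0, hC⟩ := gfun_bound j (a := a) (b := b) ha
  refine ⟨C, hC0, fun m hm ζ hζ => ?_⟩
  rw [← Real.norm_eq_abs]
  calc ‖∫ x, x ^ j * gfun ζ x ∂m‖ ≤ C * (m Set.univ).toReal := by
        apply norm_integral_le_of_norm_le_const
        filter_upwards with x
        rw [Real.norm_eq_abs, abs_mul, abs_pow]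
        exact hC ζ hζ x
    _ = C := by rw [measure_univ]; simp

lemma hasDerivAt_param_zero {ξ₀ : ℝ} (hξ₀ : 0 < ξ₀) (m : Measure ℝ)
    [IsProbabilityMeasure m] :
    HasDerivAt (fun ζ => ∫ x, gfun ζ x ∂m) (-(∫ x, x * gfun ξ₀ x ∂m)) ξ₀ := by
  have := hasDerivAt_param 0 hξ₀ m
  simpa using this

lemma hasDerivAt_param_one {ξ₀ : ℝ} (hξ₀ : 0 < ξ₀) (m : Measure ℝ)
    [IsProbabilityMeasure m] :
    HasDerivAt (fun ζ => ∫ x, x * gfun ζ x ∂m) (-(∫ x, x ^ 2 * gfun ξ₀ x ∂m)) ξ₀ := by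
  have := hasDerivAt_param 1 hξ₀ m
  simpa using this

/-- Derivative of a sliding interval integral whose integrand's parameter moves. -/
lemma hasDerivAt_sliding {G : ℝ → ℝ → ℝ} {ζf : ℝ → ℝ} {τ₀ : ℝ} {a b K : ℝ}
    (hζcont : ContinuousAt ζf τ₀)
    (hζmem : ζf τ₀ ∈ Set.Ioo a b)
    (hint : ∀ ζ ∈ Set.Icc a b, ∀ u v : ℝ, IntervalIntegrable (fun s => G s ζ) volume u v)
    (hGcont : ContinuousAt (fun s => G s (ζf τ₀)) τ₀)
    (hK : 0 ≤ K)
    (hLip : ∀ s ∈ Set.Icc (τ₀ - 1) (τ₀ + 1), ∀ ζ₁ ∈ Set.Icc a b, ∀ ζ₂ ∈ Set.Icc a b,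
      |G s ζ₁ - G s ζ₂| ≤ K * |ζ₁ - ζ₂|) :
    HasDerivAt (fun τ => ∫ s in τ₀..τ, G s (ζf τ)) (G τ₀ (ζf τ₀)) τ₀ := by
  rw [hasDerivAt_iff_isLittleO]
  rw [Asymptotics.isLittleO_iff]
  intro ε hε
  -- neighborhood control on the parameter
  have hmem1 : ∀ᶠ τ in nhds τ₀, ζf τ ∈ Set.Icc a b ∧ |ζf τ - ζf τ₀| ≤ ε / (2 * (K + 1)) := by
    have h1 : ∀ᶠ τ in nhds τ₀, ζf τ ∈ Set.Ioo a b :=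
      hζcont.eventually_mem (Ioo_mem_nhds hζmem.1 hζmem.2)
    have h2 : ∀ᶠ τ in nhds τ₀, |ζf τ - ζf τ₀| ≤ ε / (2 * (K + 1)) := by
      have : Set.Icc (ζf τ₀ - ε / (2*(K+1))) (ζf τ₀ + ε / (2*(K+1))) ∈ nhds (ζf τ₀) := by
        apply Icc_mem_nhds <;> [linarith [div_pos hε (by linarith : (0:ℝ) < 2*(K+1))];
          linarith [div_pos hε (by linarith : (0:ℝ) < 2*(K+1))]]
      filter_upwards [hζcont.eventually_mem this] with τ hτ
      rw [abs_sub_le_iff]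
      constructor <;> [linarith [hτ.2]; linarith [hτ.1]]
    filter_upwards [h1, h2] with τ hτ1 hτ2
    exact ⟨⟨hτ1.1.le, hτ1.2.le⟩, hτ2⟩
  have hmem2 : ∀ᶠ s in nhds τ₀, |G s (ζf τ₀) - G τ₀ (ζf τ₀)| ≤ ε / 2 := by
    have : Set.Icc (G τ₀ (ζf τ₀) - ε/2) (G τ₀ (ζf τ₀) + ε/2) ∈ nhds (G τ₀ (ζf τ₀)) :=
      Icc_mem_nhds (by linarith) (by linarith)
    filter_upwards [hGcont.eventually_mem this] with s hs
    rw [abs_sub_le_iff]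
    constructor <;> [linarith [hs.2]; linarith [hs.1]]
  obtain ⟨δ₂, hδ₂pos, hδ₂⟩ := Metric.eventually_nhds_iff.1 hmem2
  obtain ⟨δ₁, hδ₁pos, hδ₁⟩ := Metric.eventually_nhds_iff.1 hmem1
  rw [Metric.eventually_nhds_iff]
  refine ⟨min (min δ₁ δ₂) 1, by positivity, fun τ hτ => ?_⟩
  rw [Real.dist_eq] at hτ
  have hττ₀1 : |τ - τ₀| < δ₁ := lt_of_lt_of_le hτ (le_trans (min_le_left _ _) (min_le_left _ _))
  have hττ₀2 : |τ - τ₀| < δ₂ := lt_of_lt_of_le hτ (le_trans (min_le_left _ _) (min_le_right _ _))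
  have hττ₀3 : |τ - τ₀| ≤ 1 := le_trans hτ.le (min_le_right _ _)
  obtain ⟨hζIcc, hζclose⟩ := hδ₁ (show dist τ τ₀ < δ₁ by rwa [Real.dist_eq])
  -- rewrite the compared quantity
  have hintτ : IntervalIntegrable (fun s => G s (ζf τ)) volume τ₀ τ := hint _ hζIcc τ₀ τ
  have key : (∫ s in τ₀..τ, G s (ζf τ)) - (∫ s in τ₀..τ₀, G s (ζf τ₀))
      - (τ - τ₀) • G τ₀ (ζf τ₀)
      = ∫ s in τ₀..τ, (G s (ζf τ) - G τ₀ (ζf τ₀)) := by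
    rw [intervalIntegral.integral_sub hintτ intervalIntegrable_const,
      intervalIntegral.integral_const, intervalIntegral.integral_same]
    ring_nf
  rw [key]
  have hbnd : ∀ s ∈ Set.uIoc τ₀ τ, ‖G s (ζf τ) - G τ₀ (ζf τ₀)‖ ≤ ε := by
    intro s hs
    have hs' : |s - τ₀| ≤ |τ - τ₀| := by
      rcases Set.mem_uIoc.1 hs with ⟨h1, h2⟩ | ⟨h1, h2⟩
      · rw [abs_of_nonneg (by linarith : (0:ℝ) ≤ s - τ₀),
          abs_of_nonneg (by linarith : (0:ℝ) ≤ τ - τ₀)]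
        linarith
      · rw [abs_of_nonpos (by linarith : s - τ₀ ≤ 0),
          abs_of_nonpos (by linarith : τ - τ₀ ≤ 0)]
        linarith
    have hsIcc : s ∈ Set.Icc (τ₀ - 1) (τ₀ + 1) := by
      rcases abs_sub_le_iff.1 (le_trans hs' hττ₀3) with ⟨h1, h2⟩
      constructor <;> linarith
    have h1 : |G s (ζf τ) - G s (ζf τ₀)| ≤ K * |ζf τ - ζf τ₀| := by
      apply hLip s hsIcc _ hζIcc _ ⟨hζmem.1.le, hζmem.2.le⟩
    have h2 : |G s (ζf τ₀) - G τ₀ (ζf τ₀)| ≤ ε / 2 :=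
      hδ₂ (show dist s τ₀ < δ₂ by rw [Real.dist_eq]; exact lt_of_le_of_lt hs' hττ₀2)
    have h3 : K * |ζf τ - ζf τ₀| ≤ K * (ε / (2 * (K + 1))) :=
      mul_le_mul_of_nonneg_left hζclose hK
    have h4 : K * (ε / (2 * (K + 1))) ≤ ε / 2 := by
      rw [← mul_div_assoc, div_le_div_iff₀ (by linarith : (0:ℝ) < 2*(K+1)) (by norm_num : (0:ℝ) < 2)]
      nlinarith
    calc ‖G s (ζf τ) - G τ₀ (ζf τ₀)‖
        = |(G s (ζf τ) - G s (ζf τ₀)) + (G s (ζf τ₀) - G τ₀ (ζf τ₀))| := by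
          rw [Real.norm_eq_abs]; ring_nf
      _ ≤ |G s (ζf τ) - G s (ζf τ₀)| + |G s (ζf τ₀) - G τ₀ (ζf τ₀)| := abs_add_le _ _
      _ ≤ ε := by linarith
  calc ‖∫ s in τ₀..τ, (G s (ζf τ) - G τ₀ (ζf τ₀))‖ ≤ ε * |τ - τ₀| :=
        intervalIntegral.norm_integral_le_of_norm_le_const hbnd
    _ = ε * ‖τ - τ₀‖ := by rw [Real.norm_eq_abs]
  
end MoreHelpers

section Kernels

/-- Laplace-type integrals of a time-dependent family of measures. -/
noncomputable def P0 (κ : ℝ → ProbabilityMeasure ℝ) (s ζ : ℝ) : ℝ :=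
  ∫ x, gfun ζ x ∂(κ s : Measure ℝ)

noncomputable def Q0 (κ : ℝ → ProbabilityMeasure ℝ) (s ζ : ℝ) : ℝ :=
  ∫ x, x * gfun ζ x ∂(κ s : Measure ℝ)

noncomputable def R0 (κ : ℝ → ProbabilityMeasure ℝ) (s ζ : ℝ) : ℝ :=
  ∫ x, x ^ 2 * gfun ζ x ∂(κ s : Measure ℝ)

noncomputable def Gker (η : ℝ) (κ : ℝ → ProbabilityMeasure ℝ) (s ζ : ℝ) : ℝ :=
  Real.exp (η * s / 2) * (-(η * ζ / 2) * P0 κ s ζ + ζ ^ 2 / 2 * Q0 κ s ζ)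

noncomputable def dGker (η : ℝ) (κ : ℝ → ProbabilityMeasure ℝ) (s ζ : ℝ) : ℝ :=
  Real.exp (η * s / 2) * (-(η / 2) * P0 κ s ζ + (η * ζ / 2) * Q0 κ s ζ
    + ζ * Q0 κ s ζ - ζ ^ 2 / 2 * R0 κ s ζ)

variable {κ : ℝ → ProbabilityMeasure ℝ} {η : ℝ}

lemma contP0 (hκ : Continuous κ) {ζ : ℝ} (hζ : 0 < ζ) :
    Continuous fun s => P0 κ s ζ := by
  have := cont_P 0 hζ hκ
  simpa [P0] using this

lemma contQ0 (hκ : Continuous κ) {ζ : ℝ} (hζ : 0 < ζ) :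
    Continuous fun s => Q0 κ s ζ := by
  have := cont_P 1 hζ hκ
  simpa [Q0] using this

lemma contR0 (hκ : Continuous κ) {ζ : ℝ} (hζ : 0 < ζ) :
    Continuous fun s => R0 κ s ζ := by
  have := cont_P 2 hζ hκ
  simpa [R0] using this

lemma contG (hκ : Continuous κ) {ζ : ℝ} (hζ : 0 < ζ) :
    Continuous fun s => Gker η κ s ζ :=
  ((Real.continuous_exp.comp (by continuity)).mul
    ((continuous_const.mul (contP0 hκ hζ)).add (continuous_const.mul (contQ0 hκ hζ))))

lemma contdG (hκ : Continuous κ) {ζ : ℝ} (hζ : 0 < ζ) :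
    Continuous fun s => dGker η κ s ζ := by
  apply Continuous.mul (Real.continuous_exp.comp (by continuity))
  exact (((continuous_const.mul (contP0 hκ hζ)).add (continuous_const.mul (contQ0 hκ hζ))).add
    (continuous_const.mul (contQ0 hκ hζ))).sub (continuous_const.mul (contR0 hκ hζ))

lemma hasDerivAt_G_param {s ζ : ℝ} (hζ : 0 < ζ) :
    HasDerivAt (fun ζ => Gker η κ s ζ) (dGker η κ s ζ) ζ := by
  have hB : HasDerivAt (fun ζ => P0 κ s ζ) (-(Q0 κ s ζ)) ζ := by
    have := hasDerivAt_param_zero hζ (κ s : Measure ℝ)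
    simpa [P0, Q0] using this
  have hE : HasDerivAt (fun ζ => Q0 κ s ζ) (-(R0 κ s ζ)) ζ := by
    have := hasDerivAt_param_one hζ (κ s : Measure ℝ)
    simpa [Q0, R0] using this
  have hA : HasDerivAt (fun ζ : ℝ => -(η * ζ / 2)) (-(η / 2)) ζ := by
    have := (((hasDerivAt_id ζ).const_mul η).div_const 2).neg
    simpa [Pi.neg_def] using this
  have hC2 : HasDerivAt (fun ζ : ℝ => ζ ^ 2 / 2) ζ ζ := by
    have := (hasDerivAt_pow 2 ζ).div_const 2
    exact this.congr_deriv (by ring)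
  have := ((hA.mul hB).add (hC2.mul hE)).const_mul (Real.exp (η * s / 2))
  exact this.congr_deriv (by unfold dGker; ring)

lemma abs_dG_le (hη : 0 < η) {a b : ℝ} (ha : 0 < a) (hab : a ≤ b) (slo shi : ℝ) :
    ∃ K : ℝ, 0 ≤ K ∧ ∀ s ∈ Set.Icc slo shi, ∀ ζ ∈ Set.Icc a b,
      |dGker η κ s ζ| ≤ K := by
  obtain ⟨C₀, hC₀0, hC₀⟩ := abs_integral_P_le 0 (a := a) (b := b) ha
  obtain ⟨C₁, hC₁0, hC₁⟩ := abs_integral_P_le 1 (a := a) (b := b) ha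
  obtain ⟨C₂, hC₂0, hC₂⟩ := abs_integral_P_le 2 (a := a) (b := b) ha
  set E := Real.exp (|η| * (|slo| + |shi|) / 2) with hE
  have hEpos : 0 < E := Real.exp_pos _
  have hb0 : (0:ℝ) ≤ b := le_trans ha.le hab
  have hM0 : (0:ℝ) ≤ η / 2 * C₀ + η * b / 2 * C₁ + b * C₁ + b ^ 2 / 2 * C₂ := by
    have h1 : (0:ℝ) ≤ η / 2 * C₀ := mul_nonneg (by linarith) hC₀0
    have h2 : (0:ℝ) ≤ η * b / 2 * C₁ := mul_nonneg (by nlinarith) hC₁0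
    have h3 : (0:ℝ) ≤ b * C₁ := mul_nonneg hb0 hC₁0
    have h4 : (0:ℝ) ≤ b ^ 2 / 2 * C₂ := mul_nonneg (by positivity) hC₂0
    linarith
  refine ⟨E * (η / 2 * C₀ + η * b / 2 * C₁ + b * C₁ + b ^ 2 / 2 * C₂),
    mul_nonneg hEpos.le hM0, ?_⟩
  rintro s ⟨hs1, hs2⟩ ζ hζI
  obtain ⟨hζa, hζb⟩ := hζI
  have hzpos : 0 < ζ := lt_of_lt_of_le ha hζa
  have hbpos : 0 < b := lt_of_lt_of_le ha hab
  have hP : |P0 κ s ζ| ≤ C₀ := by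
    have := hC₀ (κ s : Measure ℝ) inferInstance ζ ⟨hζa, hζb⟩
    simpa [P0] using this
  have hQ : |Q0 κ s ζ| ≤ C₁ := by
    have := hC₁ (κ s : Measure ℝ) inferInstance ζ ⟨hζa, hζb⟩
    simpa [Q0] using this
  have hR : |R0 κ s ζ| ≤ C₂ := by
    have := hC₂ (κ s : Measure ℝ) inferInstance ζ ⟨hζa, hζb⟩
    simpa [R0] using this
  have hexp : Real.exp (η * s / 2) ≤ E := by
    rw [hE]
    apply Real.exp_le_exp.2
    have h1 : |s| ≤ |slo| + |shi| := by
      cases' abs_cases s with h h <;> cases' abs_cases slo with h2 h2 <;>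
        cases' abs_cases shi with h3 h3 <;> linarith
    calc η * s / 2 ≤ |η * s| / 2 := by
          have := le_abs_self (η * s); linarith
      _ = |η| * |s| / 2 := by rw [abs_mul]
      _ ≤ |η| * (|slo| + |shi|) / 2 := by
          have : |η| * |s| ≤ |η| * (|slo| + |shi|) :=
            mul_le_mul_of_nonneg_left h1 (abs_nonneg η)
          linarith
  rw [dGker, abs_mul, abs_of_pos (Real.exp_pos _)]
  have hsum : |(-(η / 2) * P0 κ s ζ + (η * ζ / 2) * Q0 κ s ζ
      + ζ * Q0 κ s ζ - ζ ^ 2 / 2 * R0 κ s ζ)|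
      ≤ η / 2 * C₀ + η * b / 2 * C₁ + b * C₁ + b ^ 2 / 2 * C₂ := by
    have t1 : |(-(η / 2)) * P0 κ s ζ| ≤ η / 2 * C₀ := by
      rw [abs_mul, abs_neg, abs_of_pos (by positivity : (0:ℝ) < η / 2)]
      exact mul_le_mul_of_nonneg_left hP (by positivity)
    have t2 : |(η * ζ / 2) * Q0 κ s ζ| ≤ η * b / 2 * C₁ := by
      rw [abs_mul, abs_of_pos (by positivity : (0:ℝ) < η * ζ / 2)]
      apply mul_le_mul _ hQ (abs_nonneg _) (by positivity)
      · have : η * ζ ≤ η * b := mul_le_mul_of_nonneg_left hζb hη.le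
        linarith
    have t3 : |ζ * Q0 κ s ζ| ≤ b * C₁ := by
      rw [abs_mul, abs_of_pos hzpos]
      exact mul_le_mul hζb hQ (abs_nonneg _) hbpos.le
    have t4 : |ζ ^ 2 / 2 * R0 κ s ζ| ≤ b ^ 2 / 2 * C₂ := by
      rw [abs_mul, abs_of_pos (by positivity : (0:ℝ) < ζ ^ 2 / 2)]
      apply mul_le_mul _ hR (abs_nonneg _) (by positivity)
      · have : ζ ^ 2 ≤ b ^ 2 := pow_le_pow_left₀ hzpos.le hζb 2
        linarith
    calc |(-(η / 2) * P0 κ s ζ + (η * ζ / 2) * Q0 κ s ζ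
        + ζ * Q0 κ s ζ - ζ ^ 2 / 2 * R0 κ s ζ)|
        ≤ |(-(η / 2) * P0 κ s ζ + (η * ζ / 2) * Q0 κ s ζ + ζ * Q0 κ s ζ)|
          + |ζ ^ 2 / 2 * R0 κ s ζ| := abs_sub _ _
      _ ≤ |(-(η / 2) * P0 κ s ζ + (η * ζ / 2) * Q0 κ s ζ)| + |ζ * Q0 κ s ζ|
          + |ζ ^ 2 / 2 * R0 κ s ζ| := by
          have := abs_add_le (-(η / 2) * P0 κ s ζ + (η * ζ / 2) * Q0 κ s ζ) (ζ * Q0 κ s ζ)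
          linarith
      _ ≤ |(-(η / 2)) * P0 κ s ζ| + |(η * ζ / 2) * Q0 κ s ζ| + |ζ * Q0 κ s ζ|
          + |ζ ^ 2 / 2 * R0 κ s ζ| := by
          have := abs_add_le (-(η / 2) * P0 κ s ζ) ((η * ζ / 2) * Q0 κ s ζ)
          linarith
      _ ≤ η / 2 * C₀ + η * b / 2 * C₁ + b * C₁ + b ^ 2 / 2 * C₂ := by linarith
  calc Real.exp (η * s / 2) * |(-(η / 2) * P0 κ s ζ + (η * ζ / 2) * Q0 κ s ζ
      + ζ * Q0 κ s ζ - ζ ^ 2 / 2 * R0 κ s ζ)|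
      ≤ E * (η / 2 * C₀ + η * b / 2 * C₁ + b * C₁ + b ^ 2 / 2 * C₂) := by
        apply mul_le_mul hexp hsum (abs_nonneg _) hEpos.le

lemma G_lip (hη : 0 < η) {a b : ℝ} (ha : 0 < a) (hab : a ≤ b) (slo shi : ℝ) :
    ∃ K : ℝ, 0 ≤ K ∧ ∀ s ∈ Set.Icc slo shi, ∀ ζ₁ ∈ Set.Icc a b, ∀ ζ₂ ∈ Set.Icc a b,
      |Gker η κ s ζ₁ - Gker η κ s ζ₂| ≤ K * |ζ₁ - ζ₂| := by
  obtain ⟨K, hK0, hK⟩ := abs_dG_le (κ := κ) hη ha hab slo shi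
  refine ⟨K, hK0, fun s hs ζ₁ hζ₁ ζ₂ hζ₂ => ?_⟩
  have := Convex.norm_image_sub_le_of_norm_hasDerivWithin_le
    (f := fun ζ => Gker η κ s ζ) (f' := fun ζ => dGker η κ s ζ) (s := Set.Icc a b)
    (fun ζ hζ => (hasDerivAt_G_param (lt_of_lt_of_le ha hζ.1)).hasDerivWithinAt)
    (fun ζ hζ => by rw [Real.norm_eq_abs]; exact hK s hs ζ hζ)
    (convex_Icc a b) hζ₂ hζ₁
  rw [Real.norm_eq_abs, Real.norm_eq_abs] at this
  exact this

end Kernels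

section Conservation

noncomputable def Cf (η mlam t : ℝ) : ℝ := 2 * mlam / η * (Real.exp (η * t / 2) - 1)

noncomputable def Φf (η mlam : ℝ) (lam : Measure ℝ) (κ : ℝ → ProbabilityMeasure ℝ)
    (τ ζ : ℝ) : ℝ :=
  (∫ x, gfun ζ x ∂lam) + mlam * ∫ s in (0:ℝ)..τ, Gker η κ s ζ

lemma hasDerivAt_Cf {η mlam : ℝ} (hη : η ≠ 0) (τ : ℝ) :
    HasDerivAt (Cf η mlam) (mlam * Real.exp (η * τ / 2)) τ := by
  have h1 : HasDerivAt (fun t : ℝ => η * t / 2) (η / 2) τ := by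
    simpa using ((hasDerivAt_id τ).const_mul η).div_const 2
  have h2 : HasDerivAt (fun t : ℝ => Real.exp (η * t / 2)) (Real.exp (η * τ / 2) * (η / 2)) τ :=
    (Real.hasDerivAt_exp _).comp τ h1
  have h3 := (h2.sub_const 1).const_mul (2 * mlam / η)
  exact h3.congr_deriv (by field_simp)

lemma continuous_Cf {η mlam : ℝ} : Continuous (Cf η mlam) := by
  unfold Cf
  exact continuous_const.mul ((Real.continuous_exp.comp (by continuity)).sub continuous_const)

lemma cont_Phi_tau {η mlam : ℝ} {lam : Measure ℝ} {κ : ℝ → ProbabilityMeasure ℝ}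
    (hκcont : Continuous κ) {ζ : ℝ} (hζ : 0 < ζ) (τ₀ : ℝ) :
    HasDerivAt (fun τ => Φf η mlam lam κ τ ζ) (mlam * Gker η κ τ₀ ζ) τ₀ := by
  have hG := contG (η := η) hκcont hζ
  have h2 := intervalIntegral.integral_hasDerivAt_right
    (hG.intervalIntegrable 0 τ₀)
    (hG.stronglyMeasurableAtFilter volume (nhds τ₀)) hG.continuousAt
  exact (h2.const_mul mlam).const_add _

lemma hasDerivAt_Phi_param {η mlam : ℝ} {lam : Measure ℝ} [IsProbabilityMeasure lam]
    {κ : ℝ → ProbabilityMeasure ℝ} (hκcont : Continuous κ) (hη : 0 < η)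
    {ζ₀ : ℝ} (hζ₀ : 0 < ζ₀) (τ₀ : ℝ) :
    HasDerivAt (fun ζ => Φf η mlam lam κ τ₀ ζ)
      ((-(∫ x, x * gfun ζ₀ x ∂lam)) + mlam * ∫ s in (0:ℝ)..τ₀, dGker η κ s ζ₀) ζ₀ := by
  obtain ⟨K, hK0, hK⟩ := abs_dG_le (κ := κ) hη (by linarith : (0:ℝ) < ζ₀/2)
    (by linarith : ζ₀/2 ≤ 2*ζ₀) (-(|τ₀|+1)) (|τ₀|+1)
  have key := intervalIntegral.hasDerivAt_integral_of_dominated_loc_of_deriv_le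
    (F := fun ζ s => Gker η κ s ζ) (F' := fun ζ s => dGker η κ s ζ)
    (μ := volume) (a := 0) (b := τ₀) (x₀ := ζ₀) (bound := fun _ => K)
    (s := Metric.ball ζ₀ (ζ₀/2)) (Metric.ball_mem_nhds _ (by linarith)) ?_ ?_ ?_ ?_ ?_ ?_
  · exact (hasDerivAt_param_zero hζ₀ lam).add (key.2.const_mul mlam)
  · filter_upwards [Metric.ball_mem_nhds ζ₀ (by linarith : (0:ℝ) < ζ₀/2)] with ζ hζ
    rw [Metric.mem_ball, Real.dist_eq, abs_lt] at hζ
    exact (contG hκcont (by linarith)).aestronglyMeasurable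
  · exact (contG hκcont hζ₀).intervalIntegrable 0 τ₀
  · exact (contdG hκcont hζ₀).aestronglyMeasurable
  · filter_upwards with s hs ζ hζ
    rw [Metric.mem_ball, Real.dist_eq, abs_lt] at hζ
    have hsI : s ∈ Set.Icc (-(|τ₀|+1)) (|τ₀|+1) := by
      rcases Set.mem_uIoc.1 hs with ⟨h1, h2⟩ | ⟨h1, h2⟩ <;>
        cases' abs_cases τ₀ with hc hc <;>
          exact ⟨by linarith, by linarith⟩
    rw [Real.norm_eq_abs]
    exact hK s hsI ζ ⟨by linarith, by linarith⟩
  · exact intervalIntegrable_const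
  · filter_upwards with s hs ζ hζ
    rw [Metric.mem_ball, Real.dist_eq, abs_lt] at hζ
    exact hasDerivAt_G_param (by linarith)

end Conservation

noncomputable def tilde (T : ℝ) (hT : 0 ≤ T)
    (ρ : C(Set.Icc (0:ℝ) T, ProbabilityMeasure ℝ)) : ℝ → ProbabilityMeasure ℝ :=
  fun s => ρ (Set.projIcc 0 T hT s)

/-- The conservation law: the Laplace transform of a distributional solution at any time
is determined by the data. -/
lemma conservation (η T mlam : ℝ) (hη : 1 < η) (hT : 0 < T)
    (lam : ProbabilityMeasure ℝ) (hmpos : 0 < mlam)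
    (ρ : C(Set.Icc (0:ℝ) T, ProbabilityMeasure ℝ))
    (hρ : IsDistribSol η T mlam hT.le lam ρ)
    {t₁ : ℝ} (ht₁ : t₁ ∈ Set.Icc (0:ℝ) T) {ξ₁ : ℝ} (hξ₁ : 0 < ξ₁) :
    ∫ x, gfun ξ₁ x ∂(ρ ⟨t₁, ht₁⟩ : Measure ℝ)
      = (1 + ξ₁ * Cf η mlam t₁ / 2) ^ (-η)
        * ∫ x, gfun (ξ₁ / (1 + ξ₁ * Cf η mlam t₁ / 2)) x ∂(lam : Measure ℝ) := by
  obtain ⟨ht₁0, ht₁T⟩ := ht₁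
  have hηpos : (0:ℝ) < η := by linarith
  set κ : ℝ → ProbabilityMeasure ℝ := tilde T hT.le ρ with hκdef
  have hκcont : Continuous κ := ρ.continuous.comp continuous_projIcc
  have hcar : ∀ s, ((κ s : Measure ℝ)) (Set.Ici 0) = 1 := fun s => hρ.1 _
  set D : ℝ → ℝ := fun τ => 1 + ξ₁ * (Cf η mlam t₁ - Cf η mlam τ) / 2 with hDdef
  set ξf : ℝ → ℝ := fun τ => ξ₁ / D τ with hξfdef
  have hCfmono : ∀ {u v : ℝ}, u ≤ v → Cf η mlam u ≤ Cf η mlam v := by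
    intro u v huv
    unfold Cf
    have h1 : Real.exp (η * u / 2) ≤ Real.exp (η * v / 2) := by
      apply Real.exp_le_exp.2; nlinarith
    have h2 : 0 < 2 * mlam / η := by positivity
    nlinarith
  have hDcont : Continuous D := by
    rw [hDdef]
    exact continuous_const.add
      ((continuous_const.mul (continuous_const.sub continuous_Cf)).div_const 2)
  have hD1 : ∀ τ ∈ Set.Icc (0:ℝ) t₁, 1 ≤ D τ := by
    rintro τ ⟨hτ0, hτ1⟩
    have h1 := hCfmono hτ1
    rw [hDdef]
    simp only
    nlinarith
  have hDle : ∀ τ ∈ Set.Icc (0:ℝ) t₁, D τ ≤ D 0 := by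
    rintro τ ⟨hτ0, hτ1⟩
    have h1 := hCfmono hτ0
    rw [hDdef]
    simp only
    nlinarith
  have hD00 : 1 ≤ D 0 := hD1 0 ⟨le_refl _, ht₁0⟩
  -- the window for the moving parameter
  set a : ℝ := ξ₁ / (D 0 + 1) with hadef
  set b : ℝ := ξ₁ + 1 with hbdef
  have ha : 0 < a := by rw [hadef]; positivity
  have hξfmem : ∀ τ ∈ Set.Icc (0:ℝ) t₁, ξf τ ∈ Set.Ioo a b := by
    rintro τ hτ
    have h1 := hD1 τ hτ
    have h2 := hDle τ hτ
    constructor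
    · rw [hadef, hξfdef]
      apply div_lt_div_of_pos_left hξ₁ (by linarith) (by linarith)
    · rw [hbdef, hξfdef]
      simp only
      have : ξ₁ / D τ ≤ ξ₁ / 1 := by
        apply div_le_div_of_nonneg_left hξ₁.le one_pos h1
      rw [div_one] at this
      linarith
  have hξfpos : ∀ τ ∈ Set.Icc (0:ℝ) t₁, 0 < ξf τ := fun τ hτ =>
    lt_trans ha (hξfmem τ hτ).1
  -- the key identity from the weak formulation
  have hKey : ∀ (t : ℝ) (htt : t ∈ Set.Icc (0:ℝ) T) (ζ : ℝ) (hζ : 0 < ζ),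
      Φf η mlam (lam : Measure ℝ) κ t ζ = P0 κ t ζ := by
    intro t htt ζ hζ
    have h0 := hρ.2.2 (gS ζ hζ) ⟨t, htt⟩
    have hcoe : ⇑(gS ζ hζ) = gfun ζ := rfl
    simp only [hcoe] at h0
    have hκt : κ t = ρ ⟨t, htt⟩ := by
      rw [hκdef]
      unfold tilde
      rw [Set.projIcc_of_mem]
    have h1 : (∫ s in (0:ℝ)..t, Real.exp (η * s / 2) *
        ∫ x, (η / 2 * deriv (gfun ζ) x + x / 2 * deriv (deriv (gfun ζ)) x)
          ∂(ρ (Set.projIcc 0 T hT.le s) : Measure ℝ))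
        = ∫ s in (0:ℝ)..t, Gker η κ s ζ := by
      apply intervalIntegral.integral_congr
      intro s _
      show Real.exp (η * s / 2) * ∫ x, (η / 2 * deriv (gfun ζ) x
          + x / 2 * deriv (deriv (gfun ζ)) x) ∂(ρ (Set.projIcc 0 T hT.le s) : Measure ℝ)
        = Gker η κ s ζ
      have hmeq : (ρ (Set.projIcc 0 T hT.le s) : Measure ℝ) = (κ s : Measure ℝ) := by
        rw [hκdef]; rfl
      rw [hmeq, integral_L η ζ hζ (hcar s)]
      rfl
    rw [h1] at h0
    unfold Φf
    rw [← hκt] at h0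
    have h2 : P0 κ t ζ = ∫ x, gfun ζ x ∂(κ t : Measure ℝ) := rfl
    rw [h2]
    linarith [h0]
  -- conserved quantity
  set F : ℝ → ℝ := fun τ => D τ ^ (-η) * Φf η mlam (lam : Measure ℝ) κ τ (ξf τ) with hFdef
  have hF' : ∀ τ₀ ∈ Set.Icc (0:ℝ) t₁, HasDerivAt F 0 τ₀ := by
    rintro τ₀ hτ₀I
    have hd1 : 1 ≤ D τ₀ := hD1 τ₀ hτ₀I
    have hdpos : 0 < D τ₀ := by linarith
    set ζ₀ : ℝ := ξf τ₀ with hζ₀def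
    have hζ₀pos : 0 < ζ₀ := hξfpos τ₀ hτ₀I
    set c₀ : ℝ := mlam * Real.exp (η * τ₀ / 2) with hc₀def
    -- derivative of D and ξf
    have hC := hasDerivAt_Cf (mlam := mlam) (ne_of_gt hηpos) τ₀
    have hD : HasDerivAt D (-(ξ₁ * c₀ / 2)) τ₀ := by
      have h3 := ((((hasDerivAt_const τ₀ (Cf η mlam t₁)).sub hC).const_mul ξ₁).div_const
        2).const_add 1
      exact h3.congr_deriv (by rw [hc₀def]; ring)
    have hξf' : HasDerivAt ξf (ξ₁ * (ξ₁ * c₀ / 2) / (D τ₀) ^ 2) τ₀ := by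
      have h3 := (hasDerivAt_const τ₀ ξ₁).div hD (ne_of_gt hdpos)
      exact h3.congr_deriv (by field_simp; ring)
    -- derivative of Φf in the parameter
    have hΦξ := hasDerivAt_Phi_param (mlam := mlam) (lam := (lam : Measure ℝ)) hκcont hηpos hζ₀pos τ₀
    -- derivative of Φf in time
    have hΦτ := cont_Phi_tau (η := η) (mlam := mlam) (lam := (lam : Measure ℝ))
      hκcont hζ₀pos τ₀
    -- identification of the ζ-derivative
    have hPd : HasDerivAt (fun ζ => P0 κ τ₀ ζ) (-(Q0 κ τ₀ ζ₀)) ζ₀ := by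
      have := hasDerivAt_param_zero hζ₀pos (κ τ₀ : Measure ℝ)
      simpa [P0, Q0] using this
    have hτ₀T : τ₀ ∈ Set.Icc (0:ℝ) T := ⟨hτ₀I.1, le_trans hτ₀I.2 ht₁T⟩
    have hEq : (fun ζ => P0 κ τ₀ ζ) =ᶠ[nhds ζ₀]
        (fun ζ => Φf η mlam (lam : Measure ℝ) κ τ₀ ζ) :=
      Filter.eventuallyEq_of_mem (Ioi_mem_nhds hζ₀pos)
        (fun ζ hζ => (hKey τ₀ hτ₀T ζ hζ).symm)
    have hdval : (-(∫ x, x * gfun ζ₀ x ∂(lam : Measure ℝ)))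
        + mlam * ∫ s in (0:ℝ)..τ₀, dGker η κ s ζ₀ = -(Q0 κ τ₀ ζ₀) :=
      (hΦξ.congr_of_eventuallyEq hEq).unique hPd
    -- derivative of the composite τ ↦ Φf τ (ξf τ)
    obtain ⟨K, hK0, hK⟩ := G_lip (κ := κ) hηpos ha
      (le_of_lt (lt_trans (hξfmem τ₀ hτ₀I).1 (hξfmem τ₀ hτ₀I).2)) (τ₀ - 1) (τ₀ + 1)
    have hslide := hasDerivAt_sliding (G := Gker η κ) (ζf := ξf) (τ₀ := τ₀)
      (a := a) (b := b) (hξf'.continuousAt) (hξfmem τ₀ hτ₀I)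
      (fun ζ hζ u v => (contG hκcont (lt_of_lt_of_le ha hζ.1)).intervalIntegrable u v)
      (contG hκcont hζ₀pos).continuousAt hK0 hK
    have hNagree : (fun τ => Φf η mlam (lam : Measure ℝ) κ τ₀ (ξf τ)
          + mlam * ∫ s in τ₀..τ, Gker η κ s (ξf τ))
        =ᶠ[nhds τ₀] (fun τ => Φf η mlam (lam : Measure ℝ) κ τ (ξf τ)) := by
      have hDopen : ∀ᶠ τ in nhds τ₀, 0 < D τ :=
        hDcont.continuousAt.eventually_mem (Ioi_mem_nhds hdpos)
      filter_upwards [hDopen] with τ hDτ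
      have hζτpos : 0 < ξf τ := by
        rw [hξfdef]
        exact div_pos hξ₁ hDτ
      have hGint : ∀ u v : ℝ, IntervalIntegrable (fun s => Gker η κ s (ξf τ)) volume u v :=
        fun u v => (contG hκcont hζτpos).intervalIntegrable u v
      have h4 := intervalIntegral.integral_interval_sub_left (hGint 0 τ) (hGint 0 τ₀)
      unfold Φf
      rw [← h4]
      ring
    have hcomp : HasDerivAt (fun τ => Φf η mlam (lam : Measure ℝ) κ τ₀ (ξf τ))
        (((-(∫ x, x * gfun ζ₀ x ∂(lam : Measure ℝ)))
          + mlam * ∫ s in (0:ℝ)..τ₀, dGker η κ s ζ₀) * (ξ₁ * (ξ₁ * c₀ / 2) / (D τ₀) ^ 2))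
        τ₀ := by have := HasDerivAt.comp τ₀ hΦξ hξf'; exact this
    have hN : HasDerivAt (fun τ => Φf η mlam (lam : Measure ℝ) κ τ (ξf τ))
        ((-(Q0 κ τ₀ ζ₀)) * (ξ₁ * (ξ₁ * c₀ / 2) / (D τ₀) ^ 2)
          + mlam * Gker η κ τ₀ ζ₀) τ₀ := by
      have h5 := (hcomp.add ((hslide.const_mul mlam)))
      rw [hdval] at h5
      exact h5.congr_of_eventuallyEq hNagree.symm
    -- derivative of the rpow factor
    have hrpow : HasDerivAt (fun τ => D τ ^ (-η))
        ((-η) * D τ₀ ^ (-η - 1) * (-(ξ₁ * c₀ / 2))) τ₀ := by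
      have h6 := (Real.hasDerivAt_rpow_const (x := D τ₀) (p := -η)
        (Or.inl (ne_of_gt hdpos))).comp τ₀ hD
      exact h6
    -- assemble
    have htot := hrpow.mul hN
    have hΦP : Φf η mlam (lam : Measure ℝ) κ τ₀ ζ₀ = P0 κ τ₀ ζ₀ := hKey τ₀ hτ₀T ζ₀ hζ₀pos
    rw [hΦP] at htot
    have hrel : D τ₀ ^ (-η) = D τ₀ ^ (-η - 1) * D τ₀ := by
      rw [← Real.rpow_add_one (ne_of_gt hdpos)]
      ring_nf
    have hζ₀eq : ζ₀ = ξ₁ / D τ₀ := rfl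
    have hval : (-η) * D τ₀ ^ (-η - 1) * (-(ξ₁ * c₀ / 2)) * P0 κ τ₀ ζ₀
        + D τ₀ ^ (-η) * ((-(Q0 κ τ₀ ζ₀)) * (ξ₁ * (ξ₁ * c₀ / 2) / (D τ₀) ^ 2)
          + mlam * Gker η κ τ₀ ζ₀) = 0 := by
      rw [hrel]
      unfold Gker
      rw [hc₀def, hζ₀eq]
      have hd0 : D τ₀ ≠ 0 := ne_of_gt hdpos
      field_simp
      ring
    rw [hval] at htot
    exact htot
  -- constancy on [0, t₁]
  have hcont : ContinuousOn F (Set.Icc 0 t₁) := fun τ hτ =>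
    ((hF' τ hτ).continuousAt).continuousWithinAt
  have hconst := constant_of_has_deriv_right_zero hcont
    (fun τ hτ => ((hF' τ (Set.Ico_subset_Icc_self hτ)).hasDerivWithinAt))
    t₁ (Set.right_mem_Icc.2 ht₁0)
  -- evaluate the endpoints
  have hDt₁ : D t₁ = 1 := by rw [hDdef]; simp
  have hFt₁ : F t₁ = ∫ x, gfun ξ₁ x ∂(ρ ⟨t₁, ⟨ht₁0, ht₁T⟩⟩ : Measure ℝ) := by
    rw [hFdef]
    simp only
    rw [hDt₁, Real.one_rpow, one_mul]
    have hξft₁ : ξf t₁ = ξ₁ := by rw [hξfdef]; simp only; rw [hDt₁, div_one]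
    rw [hξft₁, hKey t₁ ⟨ht₁0, ht₁T⟩ ξ₁ hξ₁]
    unfold P0
    congr 1
    rw [hκdef]
    unfold tilde
    rw [Set.projIcc_of_mem (hx := ⟨ht₁0, ht₁T⟩)]
  have hCf0 : Cf η mlam 0 = 0 := by unfold Cf; simp
  have hD0 : D 0 = 1 + ξ₁ * Cf η mlam t₁ / 2 := by
    rw [hDdef]; simp only; rw [hCf0]; ring
  have hF0 : F 0 = (1 + ξ₁ * Cf η mlam t₁ / 2) ^ (-η)
      * ∫ x, gfun (ξ₁ / (1 + ξ₁ * Cf η mlam t₁ / 2)) x ∂(lam : Measure ℝ) := by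
    rw [hFdef]
    simp only
    rw [hD0]
    congr 1
    unfold Φf
    rw [intervalIntegral.integral_same, mul_zero, add_zero]
    congr 2
    rw [hξfdef]
    simp only
    rw [hD0]
  rw [← hFt₁, ← hF0]
  exact hconst


section Ext

/-- Two probability measures carried by `[0,∞)` with the same cut-off Laplace transforms
are equal. -/
lemma laplace_ext (m₁ m₂ : Measure ℝ) [IsProbabilityMeasure m₁] [IsProbabilityMeasure m₂]
    (h₁ : m₁ (Set.Ici 0) = 1) (h₂ : m₂ (Set.Ici 0) = 1)
    (h : ∀ ξ : ℝ, 0 < ξ → ∫ x, gfun ξ x ∂m₁ = ∫ x, gfun ξ x ∂m₂) : m₁ = m₂ := by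
  set φ : ℝ → ℝ := fun x => Real.exp (-x) with hφdef
  have hφcont : Continuous φ := Real.continuous_exp.comp continuous_neg
  have hφinj : Function.Injective φ := fun x y hxy => by
    have := Real.exp_injective hxy
    linarith
  have hφm : Measurable φ := hφcont.measurable
  set T₁ : Measure ℝ := m₁.map φ with hT₁def
  set T₂ : Measure ℝ := m₂.map φ with hT₂def
  haveI : IsProbabilityMeasure T₁ := Measure.isProbabilityMeasure_map hφm.aemeasurable
  haveI : IsProbabilityMeasure T₂ := Measure.isProbabilityMeasure_map hφm.aemeasurable
  -- the pushforwards are carried by [0,1]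
  have hcarT : ∀ (m : Measure ℝ), IsProbabilityMeasure m → m (Set.Ici 0) = 1 →
      (∀ᵐ y ∂(m.map φ), y ∈ Set.Icc (0:ℝ) 1) := by
    intro m hm hc
    refine (ae_map_iff hφm.aemeasurable measurableSet_Icc).2 ?_
    filter_upwards [ae_mem_Ici_of_carried hc] with x hx
    constructor
    · exact (Real.exp_pos _).le
    · exact Real.exp_le_one_iff.2 (by simpa using hx)
  have hcT₁ : ∀ᵐ y ∂T₁, y ∈ Set.Icc (0:ℝ) 1 := hcarT m₁ inferInstance h₁
  have hcT₂ : ∀ᵐ y ∂T₂, y ∈ Set.Icc (0:ℝ) 1 := hcarT m₂ inferInstance h₂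
  -- integrability of polynomials
  have hintpoly : ∀ (q : Polynomial ℝ) (m : Measure ℝ), IsProbabilityMeasure m →
      (∀ᵐ y ∂m, y ∈ Set.Icc (0:ℝ) 1) → Integrable (fun y => q.eval y) m := by
    intro q m hm hc
    obtain ⟨B, hB⟩ := (isCompact_Icc (a := (0:ℝ)) (b := 1)).exists_bound_of_continuousOn
      (q.continuous_aeval.norm.continuousOn)
    apply Integrable.mono' (integrable_const B) q.continuous_aeval.aestronglyMeasurable
    filter_upwards [hc] with y hy
    simpa using hB y hy
  -- equal moments
  have hmom : ∀ n : ℕ, ∫ y, y ^ n ∂T₁ = ∫ y, y ^ n ∂T₂ := by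
    intro n
    rcases Nat.eq_zero_or_pos n with hn | hn
    · subst hn; simp
    have key : ∀ (m : Measure ℝ), IsProbabilityMeasure m → m (Set.Ici 0) = 1 →
        ∫ y, y ^ n ∂(m.map φ) = ∫ x, gfun (n : ℝ) x ∂m := by
      intro m hm hc
      rw [integral_map hφm.aemeasurable (continuous_pow n).aestronglyMeasurable]
      apply integral_congr_ae
      filter_upwards [ae_mem_Ici_of_carried hc] with x hx
      have hx1 : (-1:ℝ) ≤ x := le_trans (by norm_num) hx
      rw [gfun_eq_exp hx1, hφdef]
      simp only
      rw [← Real.exp_nat_mul]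
      congr 1
      ring
    rw [hT₁def, hT₂def, key m₁ inferInstance h₁, key m₂ inferInstance h₂]
    exact h n (by exact_mod_cast hn)
  -- equal polynomial integrals
  have hpoly : ∀ q : Polynomial ℝ, ∫ y, q.eval y ∂T₁ = ∫ y, q.eval y ∂T₂ := by
    intro q
    have hrw : ∀ (m : Measure ℝ), IsProbabilityMeasure m →
        (∀ᵐ y ∂m, y ∈ Set.Icc (0:ℝ) 1) →
        ∫ y, q.eval y ∂m = ∑ i ∈ Finset.range (q.natDegree + 1),
          q.coeff i * ∫ y, y ^ i ∂m := by
      intro m hm hc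
      have h1 : ∀ y : ℝ, q.eval y = ∑ i ∈ Finset.range (q.natDegree + 1),
          q.coeff i * y ^ i := fun y => Polynomial.eval_eq_sum_range y
      have h2 : ∫ y, q.eval y ∂m = ∫ y, ∑ i ∈ Finset.range (q.natDegree + 1),
          q.coeff i * y ^ i ∂m := by
        apply integral_congr_ae
        filter_upwards with y
        exact h1 y
      rw [h2, integral_finset_sum]
      · apply Finset.sum_congr rfl
        intro i _
        rw [integral_const_mul]
      · intro i _
        apply Integrable.const_mul
        apply Integrable.mono' (integrable_const (1:ℝ))
          (continuous_pow i).aestronglyMeasurable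
        filter_upwards [hc] with y hy
        rw [Real.norm_eq_abs, abs_pow]
        apply pow_le_one₀ (abs_nonneg _)
        rw [abs_le]
        exact ⟨by linarith [hy.1], hy.2⟩
    rw [hrw T₁ inferInstance hcT₁, hrw T₂ inferInstance hcT₂]
    apply Finset.sum_congr rfl
    intro i _
    rw [hmom i]
  -- equal integrals of bounded continuous functions
  have hbcf : ∀ (f : ℝ → ℝ), Continuous f → (∃ C, ∀ x, |f x| ≤ C) →
      ∫ y, f y ∂T₁ = ∫ y, f y ∂T₂ := by
    rintro f hf ⟨C, hC⟩
    have hfint : ∀ (m : Measure ℝ), IsProbabilityMeasure m → Integrable f m :=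
      fun m hm => integrable_of_bounded hf hC m
    have hest : ∀ ε : ℝ, 0 < ε → |∫ y, f y ∂T₁ - ∫ y, f y ∂T₂| ≤ 2 * ε := by
      intro ε hε
      -- polynomial approximation on [0,1]
      set fc : C((Set.Icc (0:ℝ) 1 : Set ℝ), ℝ) := ContinuousMap.restrict _ ⟨f, hf⟩ with hfc
      have hmemtop : fc ∈ (polynomialFunctions (Set.Icc (0:ℝ) 1)).topologicalClosure := by
        rw [polynomialFunctions_closure_eq_top]
        trivial
      have hmemcl : fc ∈ closure ((polynomialFunctions (Set.Icc (0:ℝ) 1)) : Set _) := by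
        rw [← Subalgebra.topologicalClosure_coe]
        exact hmemtop
      obtain ⟨g, hgmem, hgdist⟩ := Metric.mem_closure_iff.1 hmemcl ε hε
      rw [polynomialFunctions_coe] at hgmem
      obtain ⟨q, hq⟩ := hgmem
      have happrox : ∀ y ∈ Set.Icc (0:ℝ) 1, |f y - q.eval y| ≤ ε := by
        intro y hy
        have h1 := ContinuousMap.dist_apply_le_dist (f := fc) (g := g) ⟨y, hy⟩
        have h2 : g ⟨y, hy⟩ = q.eval y := by rw [← hq]; rfl
        have h3 : fc ⟨y, hy⟩ = f y := rfl
        rw [Real.dist_eq, h2, h3] at h1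
        exact le_trans h1 (le_of_lt hgdist)
      have hterm : ∀ (m : Measure ℝ), IsProbabilityMeasure m →
          (∀ᵐ y ∂m, y ∈ Set.Icc (0:ℝ) 1) →
          |∫ y, f y ∂m - ∫ y, q.eval y ∂m| ≤ ε := by
        intro m hm hc
        rw [← integral_sub (hfint m hm) (hintpoly q m hm hc), ← Real.norm_eq_abs]
        calc ‖∫ y, (f y - q.eval y) ∂m‖ ≤ ε * (m Set.univ).toReal := by
              apply norm_integral_le_of_norm_le_const
              filter_upwards [hc] with y hy
              rw [Real.norm_eq_abs]
              exact happrox y hy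
          _ = ε := by rw [measure_univ]; simp
      have e1 := hterm T₁ inferInstance hcT₁
      have e2 := hterm T₂ inferInstance hcT₂
      have e3 := hpoly q
      calc |∫ y, f y ∂T₁ - ∫ y, f y ∂T₂|
          = |(∫ y, f y ∂T₁ - ∫ y, q.eval y ∂T₁)
            - (∫ y, f y ∂T₂ - ∫ y, q.eval y ∂T₂)| := by rw [e3]; ring_nf
        _ ≤ |∫ y, f y ∂T₁ - ∫ y, q.eval y ∂T₁|
            + |∫ y, f y ∂T₂ - ∫ y, q.eval y ∂T₂| := abs_sub _ _
        _ ≤ 2 * ε := by linarith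
    by_contra hne
    have hpos : 0 < |∫ y, f y ∂T₁ - ∫ y, f y ∂T₂| := by
      rw [abs_pos]
      intro hz
      exact hne (by linarith [sub_eq_zero.1 hz])
    have := hest (|∫ y, f y ∂T₁ - ∫ y, f y ∂T₂| / 4) (by linarith)
    linarith
  -- lintegral version and extensionality
  have hT : T₁ = T₂ := by
    apply ext_of_forall_lintegral_eq_of_IsFiniteMeasure
    intro f
    have hreal : ∫ y, ((f y : ℝ)) ∂T₁ = ∫ y, ((f y : ℝ)) ∂T₂ := by
      apply hbcf (fun y => ((f y : ℝ))) (NNReal.continuous_coe.comp f.continuous)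
      refine ⟨(nndist f 0 : ℝ), fun x => ?_⟩
      show |((f x : ℝ))| ≤ ((nndist f 0 : ℝ))
      have := BoundedContinuousFunction.NNReal.upper_bound f x
      rw [abs_of_nonneg (NNReal.coe_nonneg _)]
      exact_mod_cast this
    have hfin1 := BoundedContinuousFunction.lintegral_lt_top_of_nnreal T₁ f
    have hfin2 := BoundedContinuousFunction.lintegral_lt_top_of_nnreal T₂ f
    rw [← ENNReal.toReal_eq_toReal_iff' (ne_of_lt hfin1) (ne_of_lt hfin2),
      BoundedContinuousFunction.toReal_lintegral_coe_eq_integral,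
      BoundedContinuousFunction.toReal_lintegral_coe_eq_integral]
    exact hreal
  -- pull back
  have hemb : MeasurableEmbedding φ := hφcont.measurableEmbedding hφinj
  ext s hs
  have k1 : m₁ s = T₁ (φ '' s) := by
    rw [hT₁def, hemb.map_apply, Set.preimage_image_eq s hφinj]
  have k2 : m₂ s = T₂ (φ '' s) := by
    rw [hT₂def, hemb.map_apply, Set.preimage_image_eq s hφinj]
  rw [k1, k2, hT]

end Ext

/-- Uniqueness of the distributional solution of the Cauchy problem. -/
theorem uniqueness_of_distributional_solution
    (η T : ℝ) (hη : 1 < η) (hT : 0 < T)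
    (lam : ProbabilityMeasure ℝ) (hlam : (lam : Measure ℝ) (Set.Ici 0) = 1)
    (hmom : Integrable (fun x : ℝ => x) (lam : Measure ℝ))
    (mlam : ℝ) (hmlam : mlam = ∫ x, x ∂(lam : Measure ℝ)) (hmpos : 0 < mlam)
    (μ ν : C(Set.Icc (0:ℝ) T, ProbabilityMeasure ℝ))
    (hμ : IsDistribSol η T mlam hT.le lam μ) (hν : IsDistribSol η T mlam hT.le lam ν) :
    μ = ν := by
  apply ContinuousMap.ext
  rintro ⟨t, ht⟩
  apply ProbabilityMeasure.toMeasure_injective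
  apply laplace_ext _ _ (hμ.1 ⟨t, ht⟩) (hν.1 ⟨t, ht⟩)
  intro ξ hξ
  rw [conservation η T mlam hη hT lam hmpos μ hμ ht hξ,
    conservation η T mlam hη hT lam hmpos ν hν ht hξ]
end

section
/- For every ε > 0, P( sup_{0 ≤ t ≤ T} | A_N · exp((η/2 − 1/(2N)) t + N^{−1/2} W_t) − m e^{ηt/2} | > ε ) → 0 as N → ∞; that is, the random continuous functions t ↦ A_N exp((η/2 − 1/(2N)) t + N^{−1/2} W_t) converge to t ↦ m e^{ηt/2} uniformly on [0,T] in probability. -/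
open MeasureTheory ProbabilityTheory Set Filter

/-- A standard one-dimensional Brownian motion: a continuous process starting at `0`
whose increments are independent and centered Gaussian of variance equal to the time
increment. -/
structure IsBrownianMotion {Ω : Type*} [MeasurableSpace Ω] (P : Measure Ω)
    (W : ℝ → Ω → ℝ) : Prop where
  meas : ∀ t : ℝ, Measurable (W t)
  cont : ∀ ω, Continuous fun t => W t ω
  start : ∀ ω, W 0 ω = 0
  incr_law : ∀ s t : ℝ, 0 ≤ s → s ≤ t →
    P.map (fun ω => W t ω - W s ω) = gaussianReal 0 (Real.toNNReal (t - s))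
  incr_indep : ∀ (n : ℕ) (ts : Fin (n + 1) → ℝ), Monotone ts →
    iIndepFun
      (fun i : Fin n => fun ω => W (ts i.succ) ω - W (ts i.castSucc) ω) P

private lemma abs_exp_sub_one_le_aux (x : ℝ) : |Real.exp x - 1| ≤ Real.exp |x| - 1 := by
  have h1 := Real.add_one_le_exp x
  have h2 := Real.add_one_le_exp (-x)
  rcases le_or_gt 0 x with hx | hx
  · rw [abs_of_nonneg (show (0:ℝ) ≤ Real.exp x - 1 by nlinarith), abs_of_nonneg hx]
  · have h3 : Real.exp x ≤ 1 := by
      rw [← Real.exp_zero]; exact Real.exp_le_exp.2 hx.le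
    rw [abs_of_nonpos (show Real.exp x - 1 ≤ 0 by linarith), abs_of_neg hx]
    linarith


/-- The random continuous functions `t ↦ A_N exp((η/2 − 1/(2N)) t + N^{−1/2} W_t)`
converge to `t ↦ m e^{ηt/2}` uniformly on `[0,T]` in probability. -/
theorem sup_exponential_martingale_tendsto_in_probability
    {Ω : Type*} [MeasurableSpace Ω] (P : Measure Ω) [IsProbabilityMeasure P]
    (η T m : ℝ) (hη : 1 < η) (hT : 0 < T) (hm : 0 ≤ m)
    (W : ℝ → Ω → ℝ) (hW : IsBrownianMotion P W)
    (A : ℕ → Ω → ℝ) (hAmeas : ∀ N, Measurable (A N)) (hApos : ∀ N ω, 0 ≤ A N ω)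
    (hAL2 : ∀ N, Integrable (fun ω => (A N ω) ^ 2) P)
    (hAindep : ∀ N, IndepFun (A N) (fun ω => fun t : ℝ => W t ω) P)
    (hA1 : Tendsto (fun N => ∫ ω, A N ω ∂P) atTop (nhds m))
    (hA2 : Tendsto (fun N => ∫ ω, (A N ω) ^ 2 ∂P) atTop (nhds (m ^ 2))) :
    ∀ ε > (0:ℝ),
      Tendsto (fun N : ℕ =>
          P {ω | ε < ⨆ t ∈ Set.Icc (0:ℝ) T,
            |A N ω * Real.exp ((η / 2 - 1 / (2 * N)) * t + W t ω / Real.sqrt N)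
              - m * Real.exp (η * t / 2)|})
        atTop (nhds 0) := by
  classical
  -- the running maximum of |W| on [0,T], as a countable supremum
  set g : ℚ → ℝ := fun q => max 0 (min T (q : ℝ)) with hgdef
  set M : Ω → ℝ := fun ω => ⨆ q : ℚ, |W (g q) ω| with hMdef
  have hMmeas : Measurable M := Measurable.iSup fun q => (hW.meas _).abs
  have hbdd : ∀ ω, BddAbove (Set.range fun q : ℚ => |W (g q) ω|) := by
    intro ω
    have hgm : ∀ q : ℚ, g q ∈ Icc (0:ℝ) T :=
      fun q => ⟨le_max_left _ _, max_le hT.le (min_le_left _ _)⟩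
    have himg : BddAbove ((fun s => |W s ω|) '' Icc (0:ℝ) T) :=
      (isCompact_Icc.image_of_continuousOn ((hW.cont ω).abs.continuousOn)).bddAbove
    refine himg.mono ?_
    rintro x ⟨q, rfl⟩
    exact ⟨g q, hgm q, rfl⟩
  have hMb : ∀ ω, ∀ t ∈ Icc (0:ℝ) T, |W t ω| ≤ M ω := by
    intro ω t ht
    have hclosed : IsClosed {s : ℝ | |W s ω| ≤ M ω} :=
      isClosed_le (hW.cont ω).abs continuous_const
    have hsub : Set.range g ⊆ {s : ℝ | |W s ω| ≤ M ω} := by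
      rintro x ⟨q, rfl⟩
      exact le_ciSup (hbdd ω) q
    have hdense : t ∈ closure (Set.range g) := by
      have hc : Continuous fun x : ℝ => max 0 (min T x) :=
        continuous_const.max (continuous_const.min continuous_id)
      have h1 : t ∈ closure (Set.range ((↑) : ℚ → ℝ)) := Rat.denseRange_cast t
      have h3 := (image_closure_subset_closure_image hc) (mem_image_of_mem _ h1)
      rw [← Set.range_comp] at h3
      have h2 : (0:ℝ) ⊔ T ⊓ t = t := by
        rw [inf_eq_right.mpr ht.2, sup_eq_right.mpr ht.1]
      rw [h2] at h3
      exact h3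
    exact closure_minimal hsub hclosed hdense
  have hM0 : ∀ ω, 0 ≤ M ω := fun ω => (abs_nonneg _).trans (le_ciSup (hbdd ω) 0)
  -- auxiliary random variables
  set S : ℕ → Ω → ℝ := fun N ω => T / (2 * N) + M ω / Real.sqrt N with hSdef
  set V : ℕ → Ω → ℝ := fun N ω => Real.exp (S N ω) - 1 with hVdef
  set U : ℕ → Ω → ℝ := fun N ω => |A N ω - m| with hUdef
  have hS0 : ∀ N ω, 0 ≤ S N ω := fun N ω =>
    add_nonneg (div_nonneg hT.le (by positivity)) (div_nonneg (hM0 ω) (Real.sqrt_nonneg _))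
  have hV0 : ∀ N ω, 0 ≤ V N ω := by
    intro N ω
    have := Real.add_one_le_exp (S N ω)
    have h := hS0 N ω
    simp only [hVdef]
    linarith
  have hU0 : ∀ N ω, 0 ≤ U N ω := fun N ω => abs_nonneg _
  set C := Real.exp (η * T / 2) with hCdef
  have hC0 : 0 < C := Real.exp_pos _
  -- key pointwise bound on the supremum
  have key : ∀ N : ℕ, 1 ≤ N → ∀ ω,
      (⨆ t ∈ Set.Icc (0:ℝ) T,
        |A N ω * Real.exp ((η / 2 - 1 / (2 * N)) * t + W t ω / Real.sqrt N)
          - m * Real.exp (η * t / 2)|)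
      ≤ C * (U N ω * V N ω + m * V N ω + U N ω) := by
    intro N hN ω
    have hRHS0 : 0 ≤ C * (U N ω * V N ω + m * V N ω + U N ω) :=
      mul_nonneg hC0.le (add_nonneg (add_nonneg (mul_nonneg (hU0 N ω) (hV0 N ω))
        (mul_nonneg hm (hV0 N ω))) (hU0 N ω))
    refine Real.iSup_le (fun t => Real.iSup_le (fun ht => ?_) hRHS0) hRHS0
    have hN1 : (1:ℝ) ≤ (N:ℝ) := by exact_mod_cast hN
    have hsqrtN : (0:ℝ) < Real.sqrt N := Real.sqrt_pos.2 (by linarith)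
    have h2N : (0:ℝ) < 2 * N := by linarith
    set δ := W t ω / Real.sqrt N - t / (2 * (N:ℝ)) with hδdef
    have hsplit : (η / 2 - 1 / (2 * (N:ℝ))) * t + W t ω / Real.sqrt N = η * t / 2 + δ := by
      rw [hδdef]; field_simp; ring
    rw [hsplit, Real.exp_add,
      show A N ω * (Real.exp (η * t / 2) * Real.exp δ) - m * Real.exp (η * t / 2)
        = Real.exp (η * t / 2) * (A N ω * Real.exp δ - m) from by ring,
      abs_mul, abs_of_pos (Real.exp_pos _)]
    have hexpC : Real.exp (η * t / 2) ≤ C := by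
      rw [hCdef]
      apply Real.exp_le_exp.2
      nlinarith [ht.2, ht.1]
    -- |δ| ≤ S N ω
    have hδS : |δ| ≤ S N ω := by
      have habs : |δ| ≤ |W t ω| / Real.sqrt N + t / (2 * (N:ℝ)) := by
        have h1 := abs_add_le (W t ω / Real.sqrt N) (-(t / (2 * (N:ℝ))))
        rw [abs_neg, abs_div, abs_of_nonneg (Real.sqrt_nonneg _),
          abs_of_nonneg (show (0:ℝ) ≤ t / (2 * (N:ℝ)) from div_nonneg ht.1 h2N.le)] at h1
        simpa [hδdef, sub_eq_add_neg] using h1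
      refine habs.trans ?_
      simp only [hSdef]
      rw [add_comm (T / (2 * (N:ℝ)))]
      gcongr
      · exact hMb ω t ht
      · exact ht.2
    have hexp1 : |Real.exp δ - 1| ≤ V N ω := by
      refine (abs_exp_sub_one_le_aux δ).trans ?_
      simp only [hVdef]
      have := Real.exp_le_exp.2 hδS
      linarith
    have hAle : A N ω ≤ U N ω + m := by
      have := le_abs_self (A N ω - m)
      simp only [hUdef]
      linarith
    have hprod : A N ω * |Real.exp δ - 1| ≤ (U N ω + m) * V N ω :=
      mul_le_mul hAle hexp1 (abs_nonneg _) (add_nonneg (hU0 N ω) hm)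
    have htri : |A N ω * Real.exp δ - m| ≤ A N ω * |Real.exp δ - 1| + U N ω := by
      have heq : A N ω * Real.exp δ - m = A N ω * (Real.exp δ - 1) + (A N ω - m) := by ring
      rw [heq]
      refine (abs_add_le _ _).trans ?_
      rw [abs_mul, abs_of_nonneg (hApos N ω)]
    have hinner : |A N ω * Real.exp δ - m| ≤ U N ω * V N ω + m * V N ω + U N ω := by
      nlinarith [hprod, htri]
    exact mul_le_mul hexpC hinner (abs_nonneg _) hC0.le
  have hVmeas : ∀ N, Measurable (V N) := by
    intro N
    apply Measurable.sub _ measurable_const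
    exact Real.measurable_exp.comp (measurable_const.add (hMmeas.div_const _))
  clear_value g M S V U C
  -- integrability facts
  have hAint : ∀ N, Integrable (A N) P := by
    intro N
    have hg : Integrable (fun ω => A N ω ^ 2 + 1) P := (hAL2 N).add (integrable_const 1)
    refine hg.mono' (hAmeas N).aestronglyMeasurable (ae_of_all _ fun ω => ?_)
    rw [Real.norm_eq_abs, abs_of_nonneg (hApos N ω)]
    nlinarith [sq_nonneg (A N ω - 1)]
  have hsq : ∀ N, Integrable (fun ω => (A N ω - m) ^ 2) P := by
    intro N
    have heq : (fun ω => (A N ω - m) ^ 2)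
        = fun ω => (A N ω) ^ 2 - (2 * m) * A N ω + m ^ 2 := by
      funext ω; ring
    rw [heq]
    have hf1 : Integrable (fun ω => (A N ω) ^ 2 - (2 * m) * A N ω) P :=
      (hAL2 N).sub ((hAint N).const_mul _)
    exact hf1.add (integrable_const _)
  -- L² convergence of A_N to m
  have hIeq : ∀ N, ∫ ω, (A N ω - m) ^ 2 ∂P
      = (∫ ω, (A N ω) ^ 2 ∂P) - (2 * m) * ∫ ω, A N ω ∂P + m ^ 2 := by
    intro N
    have h1 : ∀ ω, (A N ω - m) ^ 2 = (A N ω) ^ 2 - (2 * m) * A N ω + m ^ 2 := by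
      intro ω; ring
    simp_rw [h1]
    have hf1 : Integrable (fun ω => (A N ω) ^ 2 - (2 * m) * A N ω) P :=
      (hAL2 N).sub ((hAint N).const_mul _)
    rw [integral_add hf1 (integrable_const _),
      integral_sub (hAL2 N) ((hAint N).const_mul _), integral_const_mul, integral_const,
      probReal_univ, one_smul]
  have hI : Tendsto (fun N => ∫ ω, (A N ω - m) ^ 2 ∂P) atTop (nhds 0) := by
    have h := (hA2.sub (hA1.const_mul (2 * m))).add_const (m ^ 2)
    rw [show m ^ 2 - 2 * m * m + m ^ 2 = 0 from by ring] at h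
    exact h.congr fun N => (hIeq N).symm
  -- Chebyshev: convergence in probability of U to 0
  have hUconv : ∀ c : ℝ, 0 < c →
      Tendsto (fun N => P {ω | c ≤ U N ω}) atTop (nhds 0) := by
    intro c hc
    have hub : ∀ N, P {ω | c ≤ U N ω}
        ≤ ENNReal.ofReal ((∫ ω, (A N ω - m) ^ 2 ∂P) / c ^ 2) := by
      intro N
      have hsub : {ω | c ≤ U N ω} ⊆ {ω | c ^ 2 ≤ (A N ω - m) ^ 2} := by
        intro ω hω
        have h1 : c ≤ |A N ω - m| := by
          have := hω
          simp only [Set.mem_setOf_eq, hUdef] at this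
          exact this
        have h2 : c ^ 2 ≤ |A N ω - m| ^ 2 := by nlinarith [abs_nonneg (A N ω - m)]
        simpa [sq_abs] using h2
      refine (measure_mono hsub).trans ?_
      have hmk := mul_meas_ge_le_integral_of_nonneg
        (ae_of_all P fun ω => sq_nonneg (A N ω - m)) (hsq N) (c ^ 2)
      rw [← ENNReal.ofReal_toReal (measure_ne_top P _)]
      apply ENNReal.ofReal_le_ofReal
      rw [le_div_iff₀ (by positivity : (0:ℝ) < c ^ 2), mul_comm]
      exact hmk
    have hlim : Tendsto (fun N => ENNReal.ofReal ((∫ ω, (A N ω - m) ^ 2 ∂P) / c ^ 2))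
        atTop (nhds 0) := by
      have := ENNReal.tendsto_ofReal (hI.div_const (c ^ 2))
      simpa using this
    exact tendsto_of_tendsto_of_tendsto_of_le_of_le tendsto_const_nhds hlim
      (fun N => zero_le) hub
  -- convergence in probability of V to 0
  have hVtend : ∀ ω, Tendsto (fun N : ℕ => V N ω) atTop (nhds 0) := by
    intro ω
    simp only [hVdef, hSdef]
    have ha : Tendsto (fun N : ℕ => T / (2 * (N:ℝ))) atTop (nhds 0) := by
      have := tendsto_const_div_atTop_nhds_zero_nat (T / 2)
      refine this.congr fun N => ?_
      rw [div_div]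
    have hsqrt : Tendsto (fun N : ℕ => Real.sqrt N) atTop atTop := by
      have h1 : Tendsto (fun x : ℝ => x ^ (1/2 : ℝ)) atTop atTop :=
        tendsto_rpow_atTop (by norm_num)
      exact (h1.comp tendsto_natCast_atTop_atTop).congr
        fun N => (Real.sqrt_eq_rpow (N:ℝ)).symm
    have hb : Tendsto (fun N : ℕ => M ω / Real.sqrt N) atTop (nhds 0) := by
      have := hsqrt.inv_tendsto_atTop.const_mul (M ω)
      simpa [div_eq_mul_inv] using this
    have hS : Tendsto (fun N : ℕ => T / (2 * (N:ℝ)) + M ω / Real.sqrt N) atTop (nhds 0) := by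
      simpa using ha.add hb
    have h3 : Tendsto (fun N : ℕ => Real.exp (T / (2 * (N:ℝ)) + M ω / Real.sqrt N)) atTop
        (nhds 1) := by
      have := (Real.continuous_exp.tendsto 0).comp hS
      simpa [Function.comp_def] using this
    have h4 := h3.sub_const 1
    simpa using h4
  have hVconv : ∀ c : ℝ, 0 < c →
      Tendsto (fun N => P {ω | c ≤ V N ω}) atTop (nhds 0) := by
    intro c hc
    have hVim : TendstoInMeasure P V atTop 0 :=
      tendstoInMeasure_of_tendsto_ae (fun N => (hVmeas N).aestronglyMeasurable)
        (ae_of_all _ hVtend)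
    have hEq : (fun N => P {ω | c ≤ V N ω})
        = fun N => P {x | c ≤ dist (V N x) ((0 : Ω → ℝ) x)} := by
      funext N
      congr 1
      ext x
      simp only [Set.mem_setOf_eq, Pi.zero_apply, Real.dist_eq, sub_zero,
        abs_of_nonneg (hV0 N x)]
    rw [hEq]
    exact (tendstoInMeasure_iff_dist.mp hVim) c hc
  -- final assembly
  intro ε hε
  set ε' := ε / C with hε'def
  have hε'0 : 0 < ε' := div_pos hε hC0
  set sq := Real.sqrt (ε' / 3) with hsqdef
  have hsq0 : 0 < sq := Real.sqrt_pos.2 (by positivity)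
  have hss : sq * sq = ε' / 3 := Real.mul_self_sqrt (by positivity)
  set a := min sq (ε' / 3) with hadef
  set b := min sq (ε' / (3 * (m + 1))) with hbdef
  have ha0 : 0 < a := lt_min hsq0 (by positivity)
  have hb0 : 0 < b := lt_min hsq0 (by positivity)
  have hsum := (hUconv a ha0).add (hVconv b hb0)
  rw [add_zero] at hsum
  refine tendsto_of_tendsto_of_tendsto_of_le_of_le' tendsto_const_nhds hsum
    (Eventually.of_forall fun N => zero_le) ?_
  filter_upwards [eventually_ge_atTop 1] with N hN
  refine (measure_mono ?_).trans (measure_union_le _ _)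
  intro ω hω
  simp only [Set.mem_setOf_eq] at hω
  by_contra hcon
  simp only [Set.mem_union, Set.mem_setOf_eq, not_or, not_le] at hcon
  obtain ⟨hUlt, hVlt⟩ := hcon
  have hkey := key N hN ω
  have hUa1 : U N ω < sq := lt_of_lt_of_le hUlt (min_le_left _ _)
  have hUa2 : U N ω < ε' / 3 := lt_of_lt_of_le hUlt (min_le_right _ _)
  have hVb1 : V N ω < sq := lt_of_lt_of_le hVlt (min_le_left _ _)
  have hVb2 : V N ω ≤ ε' / (3 * (m + 1)) := (lt_of_lt_of_le hVlt (min_le_right _ _)).le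
  have h1 : U N ω * V N ω ≤ sq * sq := mul_le_mul hUa1.le hVb1.le (hV0 N ω) hsq0.le
  have h2 : m * V N ω ≤ ε' / 3 := by
    have h2a : m * V N ω ≤ m * (ε' / (3 * (m + 1))) := mul_le_mul_of_nonneg_left hVb2 hm
    have hp0 : 0 ≤ ε' / (3 * (m + 1)) := by positivity
    have hmul : ε' / (3 * (m + 1)) * (3 * (m + 1)) = ε' := div_mul_cancel₀ _ (by positivity)
    nlinarith
  have hsum3 : U N ω * V N ω + m * V N ω + U N ω < ε' := by
    rw [hss] at h1
    linarith
  have hfinal : C * (U N ω * V N ω + m * V N ω + U N ω) < ε := by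
    have hc := mul_lt_mul_of_pos_left hsum3 hC0
    have hCe : C * (ε / C) = ε := by
      rw [mul_comm]
      exact div_mul_cancel₀ _ (ne_of_gt hC0)
    rw [hε'def, hCe] at hc
    exact hc
  exact lt_irrefl ε (hω.trans (lt_of_le_of_lt hkey hfinal))
end

section
/- Let ρ be a distributional solution of the Cauchy problem. Then for every function h : [0,T] × ℝ → ℝ which is continuous, has compact support contained in (0,T) × ℝ, and has continuous partial derivatives ∂_t h, ∂_x h and ∂²_{xx} h, and for every t ∈ [0,T]: ∫ h(t,x) ρ(t)(dx) − ∫ h(0,x) λ(dx) = ∫₀ᵗ ∫ [ ∂_s h(s,x) + m_λ e^{ηs/2} ( (η/2) ∂_x h(s,x) + (x/2) ∂²_{xx} h(s,x) ) ] ρ(s)(dx) ds. -/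
open MeasureTheory Set

open Filter Metric ContinuousLinearMap
open scoped Convolution Topology BoundedContinuousFunction ContDiff

lemma myExistsBound (f : ℝ → ℝ) (hf : Continuous f) (hc : HasCompactSupport f) :
    ∃ C : ℝ, 0 ≤ C ∧ ∀ x, |f x| ≤ C := by
  obtain ⟨x₀, hx₀⟩ := hf.norm.exists_forall_ge_of_hasCompactSupport hc.norm
  exact ⟨‖f x₀‖, norm_nonneg _, fun x => hx₀ x⟩

lemma sliceCompact (f : ℝ × ℝ → ℝ) (hc : HasCompactSupport f) (s : ℝ) :
    HasCompactSupport (fun x => f (s, x)) := by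
  apply HasCompactSupport.intro (hc.image continuous_snd)
  intro x hx
  by_contra h0
  exact hx ⟨(s, x), subset_tsupport f h0, rfl⟩

lemma supportZero (f f' : ℝ → ℝ) (hf : ∀ x, HasDerivAt f (f' x) x)
    {x : ℝ} (hx : x ∉ tsupport f) : f' x = 0 := by
  have hev : f =ᶠ[𝓝 x] (fun _ => (0:ℝ)) := by
    have : IsOpen (tsupport f)ᶜ := (isClosed_tsupport f).isOpen_compl
    filter_upwards [this.mem_nhds hx] with y hy
    exact image_eq_zero_of_notMem_tsupport hy
  have h1 : HasDerivAt (fun _ => (0:ℝ)) (f' x) x := (hf x).congr_of_eventuallyEq hev.symm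
  have h2 : HasDerivAt (fun _ => (0:ℝ)) 0 x := hasDerivAt_const x 0
  exact h1.unique h2

lemma derivCompact {f f' : ℝ → ℝ} (hf : ∀ x, HasDerivAt f (f' x) x)
    (hc : HasCompactSupport f) : HasCompactSupport f' :=
  HasCompactSupport.intro hc (fun _ hx => supportZero f f' hf hx)


lemma contA {T : ℝ} (hT : 0 ≤ T) (ρ : C(Set.Icc (0:ℝ) T, ProbabilityMeasure ℝ))
    (f : ℝ →ᵇ ℝ) :
    Continuous (fun s : ℝ => ∫ x, f x ∂(ρ (Set.projIcc 0 T hT s) : Measure ℝ)) := by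
  rw [continuous_iff_continuousAt]
  intro s₀
  have hc : ContinuousAt (fun s : ℝ => ρ (Set.projIcc 0 T hT s)) s₀ :=
    (ρ.continuous.comp continuous_projIcc).continuousAt
  exact MeasureTheory.ProbabilityMeasure.tendsto_iff_forall_integral_tendsto.mp hc f

lemma contC {T : ℝ} (hT : 0 ≤ T) (ρ : C(Set.Icc (0:ℝ) T, ProbabilityMeasure ℝ))
    (f : ℝ → ℝ) (hf : Continuous f) (hc : HasCompactSupport f) :
    Continuous (fun s : ℝ => ∫ x, f x ∂(ρ (Set.projIcc 0 T hT s) : Measure ℝ)) := by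
  obtain ⟨C, -, hC⟩ : ∃ C : ℝ, 0 ≤ C ∧ ∀ x, |f x| ≤ C := by
    obtain ⟨x₀, hx₀⟩ := hf.norm.exists_forall_ge_of_hasCompactSupport hc.norm
    exact ⟨‖f x₀‖, norm_nonneg _, fun x => hx₀ x⟩
  exact contA hT ρ (BoundedContinuousFunction.ofNormedAddCommGroup f hf C
    (by simpa [Real.norm_eq_abs] using hC))

def toSchwartz (f : ℝ → ℝ) (hf : ContDiff ℝ ∞ f) (hc : HasCompactSupport f) :
    SchwartzMap ℝ ℝ where
  toFun := f
  smooth' := hf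
  decay' := by
    intro k n
    set u : ℝ → ℝ := fun x => ‖x‖ ^ k * ‖iteratedFDeriv ℝ n f x‖ with hu
    have hcont : Continuous u :=
      (continuous_norm.pow k).mul (hf.continuous_iteratedFDeriv (mod_cast le_top)).norm
    have hcsupp : HasCompactSupport u := by
      apply HasCompactSupport.intro (hc.iteratedFDeriv (𝕜 := ℝ) n)
      intro x hx
      simp [hu, image_eq_zero_of_notMem_tsupport hx]
    obtain ⟨x₀, hx₀⟩ := hcont.exists_forall_ge_of_hasCompactSupport hcsupp
    exact ⟨u x₀, hx₀⟩

lemma toSchwartz_coe (f : ℝ → ℝ) (hf : ContDiff ℝ ∞ f) (hc : HasCompactSupport f) :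
    ⇑(toSchwartz f hf hc) = f := rfl


lemma integrableSlice {T : ℝ} (hT : 0 ≤ T) (ρ : C(Set.Icc (0:ℝ) T, ProbabilityMeasure ℝ))
    (f : ℝ × ℝ → ℝ) (hf : Continuous f) (hc : HasCompactSupport f) (s : ℝ) (t : Set.Icc (0:ℝ) T) :
    Integrable (fun x => f (s, x)) (ρ t : Measure ℝ) :=
  (hf.comp (Continuous.prodMk_right s)).integrable_of_hasCompactSupport (sliceCompact f hc s)

lemma contB {T : ℝ} (hT : 0 ≤ T) (ρ : C(Set.Icc (0:ℝ) T, ProbabilityMeasure ℝ))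
    (f : ℝ × ℝ → ℝ) (hf : Continuous f) (hc : HasCompactSupport f) :
    Continuous (fun s : ℝ => ∫ x, f (s, x) ∂(ρ (Set.projIcc 0 T hT s) : Measure ℝ)) := by
  rw [Metric.continuous_iff]
  intro s₀ ε hε
  have huc : UniformContinuous f := hc.uniformContinuous_of_continuous hf
  obtain ⟨δ₁, hδ₁, hδ₁'⟩ := Metric.uniformContinuous_iff.mp huc (ε/3) (by linarith)
  have h2 : Continuous (fun s : ℝ => ∫ x, f (s₀, x) ∂(ρ (Set.projIcc 0 T hT s) : Measure ℝ)) :=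
    contC hT ρ _ (hf.comp (Continuous.prodMk_right s₀)) (sliceCompact f hc s₀)
  obtain ⟨δ₂, hδ₂, hδ₂'⟩ := Metric.continuous_iff.mp h2 s₀ (ε/3) (by linarith)
  refine ⟨min δ₁ δ₂, lt_min hδ₁ hδ₂, fun s hs => ?_⟩
  have hs₁ : dist s s₀ < δ₁ := hs.trans_le (min_le_left _ _)
  have hs₂ : dist s s₀ < δ₂ := hs.trans_le (min_le_right _ _)
  have key : dist (∫ x, f (s, x) ∂(ρ (Set.projIcc 0 T hT s) : Measure ℝ))
      (∫ x, f (s₀, x) ∂(ρ (Set.projIcc 0 T hT s) : Measure ℝ)) ≤ ε/3 := by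
    rw [dist_eq_norm, ← integral_sub (integrableSlice hT ρ f hf hc s _)
      (integrableSlice hT ρ f hf hc s₀ _)]
    have hb : ∀ x : ℝ, ‖f (s, x) - f (s₀, x)‖ ≤ ε/3 := by
      intro x
      rw [← dist_eq_norm]
      refine le_of_lt (hδ₁' ?_)
      rw [Prod.dist_eq]
      simp [hs₁, hδ₁]
    calc ‖∫ x, (f (s, x) - f (s₀, x)) ∂(ρ (Set.projIcc 0 T hT s) : Measure ℝ)‖
        ≤ ε/3 * ((ρ (Set.projIcc 0 T hT s) : Measure ℝ) Set.univ).toReal :=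
          norm_integral_le_of_norm_le_const (Eventually.of_forall hb)
      _ = ε/3 := by simp
  have h3 := hδ₂' s hs₂
  have htri := dist_triangle (∫ x, f (s, x) ∂(ρ (Set.projIcc 0 T hT s) : Measure ℝ)) (∫ x, f (s₀, x) ∂(ρ (Set.projIcc 0 T hT s) : Measure ℝ)) (∫ x, f (s₀, x) ∂(ρ (Set.projIcc 0 T hT s₀) : Measure ℝ))
  have : dist (∫ x, f (s₀, x) ∂(ρ (Set.projIcc 0 T hT s) : Measure ℝ)) (∫ x, f (s₀, x) ∂(ρ (Set.projIcc 0 T hT s₀) : Measure ℝ)) < ε/3 := h3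
  linarith

lemma frozen {η T mlam : ℝ} (hT : 0 ≤ T) {lam : ProbabilityMeasure ℝ}
    {ρ : C(Set.Icc (0:ℝ) T, ProbabilityMeasure ℝ)} (hρ : IsDistribSol η T mlam hT lam ρ)
    (g g' g'' : ℝ → ℝ) (hg : ∀ x, HasDerivAt g (g' x) x) (hg' : ∀ x, HasDerivAt g' (g'' x) x)
    (hg''c : Continuous g'') (hcg : HasCompactSupport g)
    (a b : ℝ) (ha : a ∈ Set.Icc (0:ℝ) T) (hb : b ∈ Set.Icc (0:ℝ) T) :
    (∫ x, g x ∂(ρ (Set.projIcc 0 T hT b) : Measure ℝ))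
      - ∫ x, g x ∂(ρ (Set.projIcc 0 T hT a) : Measure ℝ)
      = mlam * ∫ s in a..b, Real.exp (η * s / 2) *
          ∫ x, (η / 2 * g' x + x / 2 * g'' x)
            ∂(ρ (Set.projIcc 0 T hT s) : Measure ℝ) := by
  -- basic facts
  have hgc : Continuous g := by
    rw [continuous_iff_continuousAt]; exact fun x => (hg x).continuousAt
  have hg'c : Continuous g' := by
    rw [continuous_iff_continuousAt]; exact fun x => (hg' x).continuousAt
  have hcg' : HasCompactSupport g' := derivCompact hg hcg
  have hcg'' : HasCompactSupport g'' := derivCompact hg' hcg'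
  have hderiv_g : deriv g = g' := funext fun x => (hg x).deriv
  have hderiv_g' : deriv g' = g'' := funext fun x => (hg' x).deriv
  have hC1g : ContDiff ℝ 1 g := contDiff_one_iff_deriv.mpr
    ⟨fun x => (hg x).differentiableAt, by rw [hderiv_g]; exact hg'c⟩
  have hC1g' : ContDiff ℝ 1 g' := contDiff_one_iff_deriv.mpr
    ⟨fun x => (hg' x).differentiableAt, by rw [hderiv_g']; exact hg''c⟩
  -- support radius
  obtain ⟨R₀, hR₀⟩ := hcg.isBounded.subset_closedBall 0
  set R : ℝ := max R₀ 0 with hRdef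
  have hR0 : 0 ≤ R := le_max_right _ _
  have hRsub : tsupport g ⊆ Metric.closedBall 0 R :=
    hR₀.trans (Metric.closedBall_subset_closedBall (le_max_left _ _))
  have htsub' : tsupport g' ⊆ tsupport g :=
    closure_minimal (Function.support_subset_iff'.mpr
      (fun x hx => supportZero g g' hg hx)) (isClosed_tsupport g)
  have htsub'' : tsupport g'' ⊆ tsupport g :=
    (closure_minimal (Function.support_subset_iff'.mpr
      (fun x hx => supportZero g' g'' hg' (fun hxx => hx (htsub' hxx))))
      (isClosed_tsupport g))
  -- target inner integrand
  set w : ℝ → ℝ := fun x => η / 2 * g' x + x / 2 * g'' x with hwdef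
  have hwc : Continuous w := (continuous_const.mul hg'c).add
    ((continuous_id.div_const 2).mul hg''c)
  have hwcs : HasCompactSupport w := by
    apply HasCompactSupport.intro hcg
    intro x hx
    have h1 : g' x = 0 := supportZero g g' hg hx
    have h2 : g'' x = 0 := supportZero g' g'' hg' (fun hxx => hx (htsub' hxx))
    simp [hwdef, h1, h2]
  set A : ℝ → ℝ := fun s =>
    ∫ x, w x ∂(ρ (Set.projIcc 0 T hT s) : Measure ℝ) with hAdef
  have hAc : Continuous A := contC hT ρ w hwc hwcs
  have hψc : Continuous (fun s => Real.exp (η * s / 2) * A s) :=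
    (Real.continuous_exp.comp (by fun_prop)).mul hAc
  -- reduce to epsilon estimate
  set L : ℝ := ((∫ x, g x ∂(ρ (Set.projIcc 0 T hT b) : Measure ℝ))
      - ∫ x, g x ∂(ρ (Set.projIcc 0 T hT a) : Measure ℝ))
      - mlam * ∫ s in a..b, Real.exp (η * s / 2) * A s with hLdef
  suffices hsuff : ∀ ε : ℝ, 0 < ε → |L| ≤ ε by
    have h0 : |L| ≤ 0 := le_of_forall_pos_le_add (by intro ε hε; simpa using hsuff ε hε)
    have : L = 0 := abs_nonpos_iff.mp h0
    have := sub_eq_zero.mp this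
    simpa [hAdef] using this
  intro ε hε
  -- uniform continuity moduli
  set M : ℝ := 2 + |mlam| * Real.exp (|η| * T / 2) * (|η| / 2 + (R + 2) / 2) * |b - a|
    with hMdef
  have hM : 0 < M := by positivity
  set ε' : ℝ := ε / M with hε'def
  have hε' : 0 < ε' := div_pos hε hM
  obtain ⟨δ₁, hδ₁, hδ₁'⟩ := Metric.uniformContinuous_iff.mp
    (hcg.uniformContinuous_of_continuous hgc) ε' hε'
  obtain ⟨δ₂, hδ₂, hδ₂'⟩ := Metric.uniformContinuous_iff.mp
    (hcg'.uniformContinuous_of_continuous hg'c) ε' hε'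
  obtain ⟨δ₃, hδ₃, hδ₃'⟩ := Metric.uniformContinuous_iff.mp
    (hcg''.uniformContinuous_of_continuous hg''c) ε' hε'
  set δ : ℝ := min 1 (min δ₁ (min δ₂ δ₃)) with hδdef
  have hδpos : 0 < δ := by
    simp only [hδdef, lt_min_iff]
    exact ⟨one_pos, hδ₁, hδ₂, hδ₃⟩
  have hδ1 : δ ≤ 1 := min_le_left _ _
  set φ : ContDiffBump (0:ℝ) := ⟨δ/2, δ, by positivity, by linarith⟩ with hφdef
  have hφout : φ.rOut = δ := rfl
  -- mollifications
  set k : ℝ → ℝ := φ.normed volume with hkdef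
  have hkli : LocallyIntegrable k volume := φ.integrable_normed.locallyIntegrable
  have hkcs : HasCompactSupport k := φ.hasCompactSupport_normed
  have hkcd : ContDiff ℝ ∞ k := φ.contDiff_normed (n := ⊤)
  set gε : ℝ → ℝ := k ⋆[ContinuousLinearMap.lsmul ℝ ℝ, volume] g with hgεdef
  set g1 : ℝ → ℝ := k ⋆[ContinuousLinearMap.lsmul ℝ ℝ, volume] g' with hg1def
  set g2 : ℝ → ℝ := k ⋆[ContinuousLinearMap.lsmul ℝ ℝ, volume] g'' with hg2def
  have hsm : ContDiff ℝ ∞ gε :=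
    hkcs.contDiff_convolution_left _ hkcd hgc.locallyIntegrable
  have hsm1 : ContDiff ℝ ∞ g1 :=
    hkcs.contDiff_convolution_left _ hkcd hg'c.locallyIntegrable
  have hsm2 : ContDiff ℝ ∞ g2 :=
    hkcs.contDiff_convolution_left _ hkcd hg''c.locallyIntegrable
  have hcsε : HasCompactSupport gε := hkcs.convolution _ hcg
  have hcs1 : HasCompactSupport g1 := hkcs.convolution _ hcg'
  have hcs2 : HasCompactSupport g2 := hkcs.convolution _ hcg''
  have hd1 : ∀ x, HasDerivAt gε (g1 x) x := by
    intro x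
    have := HasCompactSupport.hasDerivAt_convolution_right
      (ContinuousLinearMap.lsmul ℝ ℝ) hkli hcg hC1g x
    rwa [hderiv_g] at this
  have hd2 : ∀ x, HasDerivAt g1 (g2 x) x := by
    intro x
    have := HasCompactSupport.hasDerivAt_convolution_right
      (ContinuousLinearMap.lsmul ℝ ℝ) hkli hcg' hC1g' x
    rwa [hderiv_g'] at this
  have hgε1 : deriv gε = g1 := funext fun x => (hd1 x).deriv
  have hgε2 : deriv (deriv gε) = g2 := by
    rw [hgε1]; exact funext fun x => (hd2 x).deriv
  -- uniform approximation
  have unif : ∀ (u : ℝ → ℝ) (uc : Continuous u),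
      (∀ y z : ℝ, dist y z < δ → dist (u y) (u z) < ε') →
      ∀ x, |(k ⋆[ContinuousLinearMap.lsmul ℝ ℝ, volume] u) x - u x| ≤ ε' := by
    intro u uc hu x
    have := φ.dist_normed_convolution_le (μ := volume) uc.aestronglyMeasurable
      (fun y hy => le_of_lt (hu y x (by simpa [hφout] using hy)))
    simpa [Real.dist_eq, hkdef] using this
  have unif_g : ∀ x, |gε x - g x| ≤ ε' := by
    refine unif g hgc (fun y z hyz => hδ₁' ?_) 
    exact hyz.trans_le ((hδdef ▸ min_le_right 1 _).trans (min_le_left _ _))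
  have unif_g1 : ∀ x, |g1 x - g' x| ≤ ε' := by
    refine unif g' hg'c (fun y z hyz => hδ₂' ?_)
    exact hyz.trans_le (((hδdef ▸ min_le_right 1 _).trans (min_le_right _ _)).trans
      (min_le_left _ _))
  have unif_g2 : ∀ x, |g2 x - g'' x| ≤ ε' := by
    refine unif g'' hg''c (fun y z hyz => hδ₃' ?_)
    exact hyz.trans_le (((hδdef ▸ min_le_right 1 _).trans (min_le_right _ _)).trans
      (min_le_right _ _))
  -- support bound for g2
  have hg2supp : ∀ x : ℝ, R + 1 < |x| → g2 x = 0 := by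
    intro x hx
    by_contra h0
    have hmem : x ∈ Function.support g2 := h0
    have hsub := support_convolution_subset (μ := volume)
      (f := k) (g := g'') (ContinuousLinearMap.lsmul ℝ ℝ)
    obtain ⟨y, hy, z, hz, rfl⟩ := hsub hmem
    have hy' : |y| < δ := by
      have : y ∈ Metric.ball (0:ℝ) δ := by
        rw [← hφout, ← φ.support_normed_eq (μ := volume)]; exact hy
      simpa [Real.dist_eq] using this
    have hz' : |z| ≤ R := by
      have : z ∈ Metric.closedBall (0:ℝ) R :=
        hRsub (htsub'' (subset_tsupport _ hz))
      simpa [Real.dist_eq] using this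
    have : |y + z| ≤ R + 1 := by
      calc |y + z| ≤ |y| + |z| := abs_add_le _ _
        _ ≤ R + 1 := by linarith
    linarith
  have hg''supp : ∀ x : ℝ, R < |x| → g'' x = 0 := by
    intro x hx
    apply image_eq_zero_of_notMem_tsupport
    intro hmem
    have : |x| ≤ R := by simpa [Real.dist_eq] using hRsub (htsub'' hmem)
    linarith
  -- pointwise inner estimate
  set wε : ℝ → ℝ := fun x => η / 2 * g1 x + x / 2 * g2 x with hwεdef
  have hwεc : Continuous wε := (continuous_const.mul hsm1.continuous).add
    ((continuous_id.div_const 2).mul hsm2.continuous)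
  have hwεcs : HasCompactSupport wε := by
    apply HasCompactSupport.intro (hcs1.union hcs2)
    intro x hx
    simp only [Set.mem_union, not_or] at hx
    simp [hwεdef, image_eq_zero_of_notMem_tsupport hx.1,
      image_eq_zero_of_notMem_tsupport hx.2]
  have hinner : ∀ x : ℝ, |wε x - w x| ≤ ε' * (|η| / 2 + (R + 2) / 2) := by
    intro x
    have hexpand : wε x - w x = η / 2 * (g1 x - g' x) + x / 2 * (g2 x - g'' x) := by
      simp only [hwεdef, hwdef]; ring
    have e1 : |η / 2 * (g1 x - g' x)| ≤ |η| / 2 * ε' := by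
      rw [abs_mul, abs_div]
      have := unif_g1 x
      gcongr
      simp
    have e2 : |x / 2 * (g2 x - g'' x)| ≤ (R + 2) / 2 * ε' := by
      by_cases hx : |x| ≤ R + 1
      · have h1 : |x / 2| ≤ (R + 2) / 2 := by
          rw [abs_div, abs_two]; linarith
        rw [abs_mul]
        exact mul_le_mul h1 (unif_g2 x) (abs_nonneg _) (by positivity)
      · push_neg at hx
        have hz : x / 2 * ((0:ℝ) - 0) = 0 := by ring
        rw [hg2supp x hx, hg''supp x (by linarith), hz, abs_zero]
        positivity
    calc |wε x - w x| = |η / 2 * (g1 x - g' x) + x / 2 * (g2 x - g'' x)| := by rw [hexpand]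
      _ ≤ |η / 2 * (g1 x - g' x)| + |x / 2 * (g2 x - g'' x)| := abs_add_le _ _
      _ ≤ |η| / 2 * ε' + (R + 2) / 2 * ε' := add_le_add e1 e2
      _ = ε' * (|η| / 2 + (R + 2) / 2) := by ring
  -- continuity for mollified inner integral
  have hAεc : Continuous (fun s : ℝ =>
      ∫ x, wε x ∂(ρ (Set.projIcc 0 T hT s) : Measure ℝ)) :=
    contC hT ρ wε hwεc hwεcs
  have hψεc : Continuous (fun s : ℝ => Real.exp (η * s / 2) *
      ∫ x, wε x ∂(ρ (Set.projIcc 0 T hT s) : Measure ℝ)) :=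
    (Real.continuous_exp.comp (by fun_prop)).mul hAεc
  -- Schwartz identity for the mollification
  have hid : ∀ (c : ℝ) (hc : c ∈ Set.Icc (0:ℝ) T),
      (∫ x, gε x ∂(ρ (Set.projIcc 0 T hT c) : Measure ℝ)) - ∫ x, gε x ∂(lam : Measure ℝ)
        = mlam * ∫ s in (0:ℝ)..c, Real.exp (η * s / 2) *
            ∫ x, wε x ∂(ρ (Set.projIcc 0 T hT s) : Measure ℝ) := by
    intro c hc
    have h0 := hρ.2.2 (toSchwartz gε hsm hcsε) ⟨c, hc⟩
    simp only [toSchwartz_coe] at h0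
    rw [hgε2, hgε1] at h0
    rw [Set.projIcc_of_mem hT hc]
    exact h0
  have key1 : (∫ x, gε x ∂(ρ (Set.projIcc 0 T hT b) : Measure ℝ))
      - ∫ x, gε x ∂(ρ (Set.projIcc 0 T hT a) : Measure ℝ)
      = mlam * ∫ s in a..b, Real.exp (η * s / 2) *
          ∫ x, wε x ∂(ρ (Set.projIcc 0 T hT s) : Measure ℝ) := by
    have h3 := intervalIntegral.integral_interval_sub_left
      (hψεc.intervalIntegrable (μ := volume) 0 b) (hψεc.intervalIntegrable (μ := volume) 0 a)
    calc (∫ x, gε x ∂(ρ (Set.projIcc 0 T hT b) : Measure ℝ))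
          - ∫ x, gε x ∂(ρ (Set.projIcc 0 T hT a) : Measure ℝ)
        = ((∫ x, gε x ∂(ρ (Set.projIcc 0 T hT b) : Measure ℝ))
            - ∫ x, gε x ∂(lam : Measure ℝ))
          - ((∫ x, gε x ∂(ρ (Set.projIcc 0 T hT a) : Measure ℝ))
            - ∫ x, gε x ∂(lam : Measure ℝ)) := by ring
      _ = (mlam * ∫ s in (0:ℝ)..b, Real.exp (η * s / 2) *
            ∫ x, wε x ∂(ρ (Set.projIcc 0 T hT s) : Measure ℝ))
          - mlam * ∫ s in (0:ℝ)..a, Real.exp (η * s / 2) *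
            ∫ x, wε x ∂(ρ (Set.projIcc 0 T hT s) : Measure ℝ) := by
            rw [hid b hb, hid a ha]
      _ = mlam * ((∫ s in (0:ℝ)..b, Real.exp (η * s / 2) *
            ∫ x, wε x ∂(ρ (Set.projIcc 0 T hT s) : Measure ℝ))
          - ∫ s in (0:ℝ)..a, Real.exp (η * s / 2) *
            ∫ x, wε x ∂(ρ (Set.projIcc 0 T hT s) : Measure ℝ)) := by ring
      _ = mlam * ∫ s in a..b, Real.exp (η * s / 2) *
            ∫ x, wε x ∂(ρ (Set.projIcc 0 T hT s) : Measure ℝ) := by rw [h3]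
  -- integral estimates
  have est1 : ∀ c : ℝ, |(∫ x, g x ∂(ρ (Set.projIcc 0 T hT c) : Measure ℝ))
      - ∫ x, gε x ∂(ρ (Set.projIcc 0 T hT c) : Measure ℝ)| ≤ ε' := by
    intro c
    rw [← integral_sub (hgc.integrable_of_hasCompactSupport hcg)
      (hsm.continuous.integrable_of_hasCompactSupport hcsε)]
    have hb1 := norm_integral_le_of_norm_le_const
      (μ := (ρ (Set.projIcc 0 T hT c) : Measure ℝ))
      (f := fun x => g x - gε x) (C := ε') (Eventually.of_forall (fun x => by
        rw [Real.norm_eq_abs, abs_sub_comm]; exact unif_g x))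
    simpa using hb1
  have estA : ∀ s : ℝ, |(∫ x, wε x ∂(ρ (Set.projIcc 0 T hT s) : Measure ℝ)) - A s|
      ≤ ε' * (|η| / 2 + (R + 2) / 2) := by
    intro s
    have hAs : A s = ∫ x, w x ∂(ρ (Set.projIcc 0 T hT s) : Measure ℝ) := rfl
    rw [hAs, ← integral_sub (hwεc.integrable_of_hasCompactSupport hwεcs)
      (hwc.integrable_of_hasCompactSupport hwcs)]
    have hb1 := norm_integral_le_of_norm_le_const
      (μ := (ρ (Set.projIcc 0 T hT s) : Measure ℝ))
      (f := fun x => wε x - w x) (C := ε' * (|η| / 2 + (R + 2) / 2))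
      (Eventually.of_forall (fun x => by rw [Real.norm_eq_abs]; exact hinner x))
    simpa using hb1
  have estI : |(∫ s in a..b, Real.exp (η * s / 2) *
        ∫ x, wε x ∂(ρ (Set.projIcc 0 T hT s) : Measure ℝ))
      - ∫ s in a..b, Real.exp (η * s / 2) * A s|
      ≤ Real.exp (|η| * T / 2) * (ε' * (|η| / 2 + (R + 2) / 2)) * |b - a| := by
    rw [← intervalIntegral.integral_sub (hψεc.intervalIntegrable (μ := volume) a b)
      (hψc.intervalIntegrable (μ := volume) a b)]
    have hb1 := intervalIntegral.norm_integral_le_of_norm_le_const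
      (C := Real.exp (|η| * T / 2) * (ε' * (|η| / 2 + (R + 2) / 2)))
      (f := fun s => Real.exp (η * s / 2) *
          (∫ x, wε x ∂(ρ (Set.projIcc 0 T hT s) : Measure ℝ))
        - Real.exp (η * s / 2) * A s) (a := a) (b := b) ?_
    · simpa using hb1
    · intro s hs
      have hmin : (0:ℝ) ≤ min a b := le_min ha.1 hb.1
      have hs0 : 0 ≤ s := le_of_lt (lt_of_le_of_lt hmin hs.1)
      have hsT : s ≤ T := le_trans hs.2 (max_le ha.2 hb.2)
      have hexp : Real.exp (η * s / 2) ≤ Real.exp (|η| * T / 2) := by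
        apply Real.exp_le_exp.mpr
        have h5 : η * s ≤ |η| * T :=
          le_trans (mul_le_mul_of_nonneg_right (le_abs_self η) hs0)
            (mul_le_mul_of_nonneg_left hsT (abs_nonneg η))
        linarith
      show ‖Real.exp (η * s / 2) *
          (∫ x, wε x ∂(ρ (Set.projIcc 0 T hT s) : Measure ℝ))
        - Real.exp (η * s / 2) * A s‖
        ≤ Real.exp (|η| * T / 2) * (ε' * (|η| / 2 + (R + 2) / 2))
      rw [Real.norm_eq_abs, ← mul_sub, abs_mul, Real.abs_exp]
      exact mul_le_mul hexp (estA s) (abs_nonneg _) (Real.exp_pos _).le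
  -- put everything together
  have hLexpr : L = ((∫ x, g x ∂(ρ (Set.projIcc 0 T hT b) : Measure ℝ))
        - ∫ x, gε x ∂(ρ (Set.projIcc 0 T hT b) : Measure ℝ))
      - ((∫ x, g x ∂(ρ (Set.projIcc 0 T hT a) : Measure ℝ))
        - ∫ x, gε x ∂(ρ (Set.projIcc 0 T hT a) : Measure ℝ))
      + mlam * ((∫ s in a..b, Real.exp (η * s / 2) *
            ∫ x, wε x ∂(ρ (Set.projIcc 0 T hT s) : Measure ℝ))
          - ∫ s in a..b, Real.exp (η * s / 2) * A s) := by
    rw [hLdef]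
    linear_combination key1
  have habs : |L| ≤ ε' + ε' + |mlam| *
      (Real.exp (|η| * T / 2) * (ε' * (|η| / 2 + (R + 2) / 2)) * |b - a|) := by
    rw [hLexpr]
    have t1 := est1 b
    have t2 := est1 a
    have t3 : |mlam * ((∫ s in a..b, Real.exp (η * s / 2) *
            ∫ x, wε x ∂(ρ (Set.projIcc 0 T hT s) : Measure ℝ))
          - ∫ s in a..b, Real.exp (η * s / 2) * A s)|
        ≤ |mlam| * (Real.exp (|η| * T / 2) * (ε' * (|η| / 2 + (R + 2) / 2)) * |b - a|) := by
      rw [abs_mul]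
      exact mul_le_mul_of_nonneg_left estI (abs_nonneg _)
    have habs2 : ∀ u v : ℝ, |u - v| ≤ |u| + |v| := fun u v => by
      rw [sub_eq_add_neg, ← abs_neg v]; exact abs_add_le u (-v)
    refine le_trans (abs_add_le _ _) ?_
    refine le_trans (add_le_add_left (habs2 _ _) _) ?_
    exact add_le_add (add_le_add t1 t2) t3
  have hfin : ε' + ε' + |mlam| * (Real.exp (|η| * T / 2) *
      (ε' * (|η| / 2 + (R + 2) / 2)) * |b - a|) = ε' * M := by
    rw [hMdef]; ring
  have hεM : ε' * M = ε := by
    rw [hε'def, div_mul_cancel₀ _ hM.ne']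
  calc |L| ≤ ε' + ε' + |mlam| * (Real.exp (|η| * T / 2) *
      (ε' * (|η| / 2 + (R + 2) / 2)) * |b - a|) := habs
    _ = ε' * M := hfin
    _ = ε := hεM

/-- Any distributional solution of the Cauchy problem also satisfies the weak formulation
against time-dependent test functions `h ∈ C^{1,2}_c((0,T) × ℝ)`. -/
theorem distributional_solution_time_dependent_test_functions
    (η T : ℝ) (hη : 1 < η) (hT : 0 < T)
    (lam : ProbabilityMeasure ℝ) (hlam : (lam : Measure ℝ) (Set.Ici 0) = 1)
    (hmom : Integrable (fun x : ℝ => x) (lam : Measure ℝ))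
    (mlam : ℝ) (hmlam : mlam = ∫ x, x ∂(lam : Measure ℝ)) (hmpos : 0 < mlam)
    (ρ : C(Set.Icc (0:ℝ) T, ProbabilityMeasure ℝ)) (hρ : IsDistribSol η T mlam hT.le lam ρ)
    (h ht hx hxx : ℝ × ℝ → ℝ)
    (hcont : Continuous h) (hsupp : HasCompactSupport h)
    (hsupp' : tsupport h ⊆ Set.Ioo 0 T ×ˢ Set.univ)
    (hht : ∀ p : ℝ × ℝ, HasDerivAt (fun u => h (u, p.2)) (ht p) p.1)
    (hhx : ∀ p : ℝ × ℝ, HasDerivAt (fun y => h (p.1, y)) (hx p) p.2)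
    (hhxx : ∀ p : ℝ × ℝ, HasDerivAt (fun y => hx (p.1, y)) (hxx p) p.2)
    (hhtc : Continuous ht) (hhxc : Continuous hx) (hhxxc : Continuous hxx) :
    ∀ t : Set.Icc (0:ℝ) T,
      (∫ x, h ((t : ℝ), x) ∂(ρ t : Measure ℝ)) - ∫ x, h (0, x) ∂(lam : Measure ℝ)
        = ∫ s in (0:ℝ)..(t : ℝ),
            ∫ x, (ht (s, x) + mlam * Real.exp (η * s / 2) *
                (η / 2 * hx (s, x) + x / 2 * hxx (s, x)))
              ∂(ρ (Set.projIcc 0 T hT.le s) : Measure ℝ) := by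
  intro t₀
  -- vanishing of partial derivatives outside the support of h
  have hball : ∀ p : ℝ × ℝ, p ∉ tsupport h → ∃ ε > 0, ∀ q : ℝ × ℝ,
      dist q p < ε → q ∉ tsupport h := by
    intro p hp
    obtain ⟨ε, hε, hsub⟩ := Metric.isOpen_iff.mp (isClosed_tsupport h).isOpen_compl p hp
    exact ⟨ε, hε, fun q hq => hsub hq⟩
  have hht0 : ∀ p : ℝ × ℝ, p ∉ tsupport h → ht p = 0 := by
    intro p hp
    obtain ⟨ε, hε, hsub⟩ := hball p hp
    have hev : (fun u => h (u, p.2)) =ᶠ[𝓝 p.1] (fun _ => (0:ℝ)) := by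
      filter_upwards [Metric.ball_mem_nhds p.1 hε] with u hu
      apply image_eq_zero_of_notMem_tsupport
      apply hsub
      rw [Prod.dist_eq]
      simp [hε, Metric.mem_ball.mp hu]
    exact ((hht p).congr_of_eventuallyEq hev.symm).unique (hasDerivAt_const _ _)
  have hhx0 : ∀ p : ℝ × ℝ, p ∉ tsupport h → hx p = 0 := by
    intro p hp
    obtain ⟨ε, hε, hsub⟩ := hball p hp
    have hev : (fun y => h (p.1, y)) =ᶠ[𝓝 p.2] (fun _ => (0:ℝ)) := by
      filter_upwards [Metric.ball_mem_nhds p.2 hε] with y hy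
      apply image_eq_zero_of_notMem_tsupport
      apply hsub
      rw [Prod.dist_eq]
      simp [hε, Metric.mem_ball.mp hy]
    exact ((hhx p).congr_of_eventuallyEq hev.symm).unique (hasDerivAt_const _ _)
  have hhxx0 : ∀ p : ℝ × ℝ, p ∉ tsupport h → hxx p = 0 := by
    intro p hp
    obtain ⟨ε, hε, hsub⟩ := hball p hp
    have hev : (fun y => hx (p.1, y)) =ᶠ[𝓝 p.2] (fun _ => (0:ℝ)) := by
      filter_upwards [Metric.ball_mem_nhds p.2 hε] with y hy
      apply hhx0
      apply hsub
      rw [Prod.dist_eq]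
      simp [hε, Metric.mem_ball.mp hy]
    exact ((hhxx p).congr_of_eventuallyEq hev.symm).unique (hasDerivAt_const _ _)
  have hhtcs : HasCompactSupport ht := HasCompactSupport.intro hsupp hht0
  have hhxcs : HasCompactSupport hx := HasCompactSupport.intro hsupp hhx0
  have hhxxcs : HasCompactSupport hxx := HasCompactSupport.intro hsupp hhxx0
  -- the full space-time integrand
  set q : ℝ × ℝ → ℝ := fun p => ht p + mlam * Real.exp (η * p.1 / 2) *
      (η / 2 * hx p + p.2 / 2 * hxx p) with hqdef
  have hqc : Continuous q := by
    apply hhtc.add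
    apply Continuous.mul
    · exact continuous_const.mul (Real.continuous_exp.comp (by fun_prop))
    · exact (continuous_const.mul hhxc).add ((continuous_snd.div_const 2).mul hhxxc)
  have hqcs : HasCompactSupport q := by
    apply HasCompactSupport.intro hsupp
    intro p hp
    simp [hqdef, hht0 p hp, hhx0 p hp, hhxx0 p hp]
  -- F and G
  set F : ℝ → ℝ := fun s =>
    ∫ x, h (s, x) ∂(ρ (Set.projIcc 0 T hT.le s) : Measure ℝ) with hFdef
  set G : ℝ → ℝ := fun s =>
    ∫ x, (ht (s, x) + mlam * Real.exp (η * s / 2) *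
      (η / 2 * hx (s, x) + x / 2 * hxx (s, x)))
      ∂(ρ (Set.projIcc 0 T hT.le s) : Measure ℝ) with hGdef
  have hFc : Continuous F := contB hT.le ρ h hcont hsupp
  have hGc : Continuous G := contB hT.le ρ q hqc hqcs
  -- derivative of F in the interior
  have hFderiv : ∀ τ, τ ∈ Set.Ioo (0:ℝ) T → HasDerivAt F (G τ) τ := by
    intro τ hτ
    have hτIcc : τ ∈ Set.Icc (0:ℝ) T := ⟨hτ.1.le, hτ.2.le⟩
    -- frozen-time slice test functions
    have hsg : ∀ x : ℝ, HasDerivAt (fun y => h (τ, y)) (hx (τ, x)) x :=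
      fun x => hhx (τ, x)
    have hsg' : ∀ x : ℝ, HasDerivAt (fun y => hx (τ, y)) (hxx (τ, x)) x :=
      fun x => hhxx (τ, x)
    have hsgcs : HasCompactSupport (fun y => h (τ, y)) := sliceCompact h hsupp τ
    have hsg''c : Continuous (fun y => hxx (τ, y)) := hhxxc.comp (Continuous.prodMk_right τ)
    -- decomposition of F
    set F₂ : ℝ → ℝ := fun u =>
      ∫ x, h (τ, x) ∂(ρ (Set.projIcc 0 T hT.le u) : Measure ℝ) with hF₂def
    set F₁ : ℝ → ℝ := fun u =>
      ∫ x, (h (u, x) - h (τ, x)) ∂(ρ (Set.projIcc 0 T hT.le u) : Measure ℝ) with hF₁def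
    have hsplit : F = fun u => F₁ u + F₂ u := by
      funext u
      simp only [hFdef, hF₁def, hF₂def]
      rw [integral_sub (integrableSlice hT.le ρ h hcont hsupp u (Set.projIcc 0 T hT.le u))
        (integrableSlice hT.le ρ h hcont hsupp τ (Set.projIcc 0 T hT.le u))]
      ring
    -- inner integrand for the frozen identity
    set wτ : ℝ → ℝ := fun x => η / 2 * hx (τ, x) + x / 2 * hxx (τ, x) with hwτdef
    have hwτc : Continuous wτ := by
      apply Continuous.add
      · exact continuous_const.mul (hhxc.comp (Continuous.prodMk_right τ))
      · exact (continuous_id.div_const 2).mul hsg''c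
    have hwτcs : HasCompactSupport wτ := by
      apply HasCompactSupport.intro (hsupp.image continuous_snd)
      intro x hxK
      have hnm : (τ, x) ∉ tsupport h := fun hmem => hxK ⟨(τ, x), hmem, rfl⟩
      simp [hwτdef, hhx0 _ hnm, hhxx0 _ hnm]
    set Aτ : ℝ → ℝ := fun s =>
      ∫ x, wτ x ∂(ρ (Set.projIcc 0 T hT.le s) : Measure ℝ) with hAτdef
    have hAτc : Continuous Aτ := contC hT.le ρ wτ hwτc hwτcs
    have hψτc : Continuous (fun s => Real.exp (η * s / 2) * Aτ s) :=
      (Real.continuous_exp.comp (by fun_prop)).mul hAτc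
    -- derivative of F₂ via the frozen-time identity
    have hΦd : HasDerivAt (fun u => F₂ τ + mlam * ∫ s in τ..u,
        Real.exp (η * s / 2) * Aτ s) (mlam * (Real.exp (η * τ / 2) * Aτ τ)) τ := by
      apply HasDerivAt.const_add
      apply HasDerivAt.const_mul
      exact intervalIntegral.integral_hasDerivAt_right
        (hψτc.intervalIntegrable (μ := volume) τ τ)
        (hψτc.stronglyMeasurableAtFilter volume (𝓝 τ))
        hψτc.continuousAt
    have hΦeq : F₂ =ᶠ[𝓝 τ] (fun u => F₂ τ + mlam * ∫ s in τ..u,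
        Real.exp (η * s / 2) * Aτ s) := by
      filter_upwards [isOpen_Ioo.mem_nhds hτ] with u hu
      have hfz := frozen hT.le hρ (fun y => h (τ, y)) (fun y => hx (τ, y))
        (fun y => hxx (τ, y)) hsg hsg' hsg''c hsgcs τ u hτIcc ⟨hu.1.le, hu.2.le⟩
      have e1 : F₂ u = ∫ x, h (τ, x) ∂(ρ (Set.projIcc 0 T hT.le u) : Measure ℝ) := rfl
      have e2 : F₂ τ = ∫ x, h (τ, x) ∂(ρ (Set.projIcc 0 T hT.le τ) : Measure ℝ) := rfl
      rw [e1, e2] at *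
      linarith [hfz]
    have hd₂ : HasDerivAt F₂ (mlam * (Real.exp (η * τ / 2) * Aτ τ)) τ :=
      hΦd.congr_of_eventuallyEq hΦeq
    -- derivative of F₁ via the slope
    set Lτ : ℝ := ∫ x, ht (τ, x) ∂(ρ (Set.projIcc 0 T hT.le τ) : Measure ℝ) with hLτdef
    have hF₁τ : F₁ τ = 0 := by
      have : F₁ τ = ∫ x, (h (τ, x) - h (τ, x))
          ∂(ρ (Set.projIcc 0 T hT.le τ) : Measure ℝ) := rfl
      rw [this]
      simp
    have hd₁ : HasDerivAt F₁ Lτ τ := by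
      rw [hasDerivAt_iff_tendsto_slope, Metric.tendsto_nhdsWithin_nhds]
      intro ε hε
      obtain ⟨δ₁, hδ₁, hδ₁'⟩ := Metric.uniformContinuous_iff.mp
        (hhtcs.uniformContinuous_of_continuous hhtc) (ε/4) (by linarith)
      have hIc : Continuous (fun u : ℝ =>
          ∫ x, ht (τ, x) ∂(ρ (Set.projIcc 0 T hT.le u) : Measure ℝ)) :=
        contC hT.le ρ (fun x => ht (τ, x)) (hhtc.comp (Continuous.prodMk_right τ))
          (sliceCompact ht hhtcs τ)
      obtain ⟨δ₂, hδ₂, hδ₂'⟩ := Metric.continuous_iff.mp hIc τ (ε/4) (by linarith)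
      refine ⟨min δ₁ δ₂, lt_min hδ₁ hδ₂, ?_⟩
      intro u hu hud
      have hune : u ≠ τ := hu
      have hud₁ : dist u τ < δ₁ := hud.trans_le (min_le_left _ _)
      have hud₂ : dist u τ < δ₂ := hud.trans_le (min_le_right _ _)
      have hne : u - τ ≠ 0 := sub_ne_zero.mpr hune
      have habs : 0 < |u - τ| := abs_pos.mpr hne
      set Iu : ℝ := ∫ x, ht (τ, x) ∂(ρ (Set.projIcc 0 T hT.le u) : Measure ℝ) with hIudef
      have hptw : ∀ x : ℝ, |h (u, x) - h (τ, x) - (u - τ) * ht (τ, x)| ≤ ε/4 * |u - τ| := by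
        intro x
        have hconv : Convex ℝ (Metric.ball τ (min δ₁ δ₂)) := convex_ball _ _
        have hders : ∀ r ∈ Metric.ball τ (min δ₁ δ₂),
            HasDerivWithinAt (fun r => h (r, x) - r * ht (τ, x))
              (ht (r, x) - ht (τ, x)) (Metric.ball τ (min δ₁ δ₂)) r := by
          intro r hr
          exact ((hht (r, x)).sub (hasDerivAt_mul_const (ht (τ, x)))).hasDerivWithinAt
        have hbound : ∀ r ∈ Metric.ball τ (min δ₁ δ₂), ‖ht (r, x) - ht (τ, x)‖ ≤ ε/4 := by
          intro r hr
          rw [Real.norm_eq_abs, ← Real.dist_eq]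
          apply le_of_lt
          apply hδ₁'
          rw [Prod.dist_eq]
          have hrδ : dist r τ < δ₁ := (Metric.mem_ball.mp hr).trans_le (min_le_left _ _)
          simp [hrδ, hδ₁]
        have hmem_u : u ∈ Metric.ball τ (min δ₁ δ₂) := Metric.mem_ball.mpr hud
        have hmem_τ : τ ∈ Metric.ball τ (min δ₁ δ₂) := Metric.mem_ball_self (lt_min hδ₁ hδ₂)
        have hmvt := hconv.norm_image_sub_le_of_norm_hasDerivWithin_le hders hbound hmem_τ hmem_u
        have heq : (h (u, x) - u * ht (τ, x)) - (h (τ, x) - τ * ht (τ, x))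
            = h (u, x) - h (τ, x) - (u - τ) * ht (τ, x) := by ring
        rw [heq] at hmvt
        simpa [Real.norm_eq_abs] using hmvt
      have hint : |F₁ u - (u - τ) * Iu| ≤ ε/4 * |u - τ| := by
        have hint1 : Integrable (fun x => h (u, x) - h (τ, x))
            (ρ (Set.projIcc 0 T hT.le u) : Measure ℝ) :=
          (integrableSlice hT.le ρ h hcont hsupp u (Set.projIcc 0 T hT.le u)).sub
            (integrableSlice hT.le ρ h hcont hsupp τ (Set.projIcc 0 T hT.le u))
        have hint2 : Integrable (fun x => (u - τ) * ht (τ, x))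
            (ρ (Set.projIcc 0 T hT.le u) : Measure ℝ) :=
          (integrableSlice hT.le ρ ht hhtc hhtcs τ (Set.projIcc 0 T hT.le u)).const_mul _
        have hsub : F₁ u - (u - τ) * Iu = ∫ x, (h (u, x) - h (τ, x) - (u - τ) * ht (τ, x))
            ∂(ρ (Set.projIcc 0 T hT.le u) : Measure ℝ) := by
          have e1 : F₁ u = ∫ x, (h (u, x) - h (τ, x))
              ∂(ρ (Set.projIcc 0 T hT.le u) : Measure ℝ) := rfl
          rw [e1, hIudef, ← integral_const_mul, ← integral_sub hint1 hint2]
        rw [hsub]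
        have hb1 := norm_integral_le_of_norm_le_const
          (μ := (ρ (Set.projIcc 0 T hT.le u) : Measure ℝ))
          (f := fun x => h (u, x) - h (τ, x) - (u - τ) * ht (τ, x)) (C := ε/4 * |u - τ|)
          (Eventually.of_forall (fun x => by rw [Real.norm_eq_abs]; exact hptw x))
        simpa using hb1
      have hIuτ : dist Iu Lτ < ε/4 := hδ₂' u hud₂
      have hslope : slope F₁ τ u = F₁ u / (u - τ) := by
        rw [slope_def_field, hF₁τ, sub_zero]
      rw [Real.dist_eq, hslope]
      have hsplit2 : F₁ u / (u - τ) - Lτ = (F₁ u - (u - τ) * Iu) / (u - τ) + (Iu - Lτ) := by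
        field_simp
        ring
      rw [hsplit2]
      have hterm1 : |(F₁ u - (u - τ) * Iu) / (u - τ)| ≤ ε/4 := by
        rw [abs_div]
        rw [div_le_iff₀ habs]
        calc |F₁ u - (u - τ) * Iu| ≤ ε/4 * |u - τ| := hint
          _ = ε/4 * |u - τ| := rfl
      have hterm2 : |Iu - Lτ| < ε/4 := by rw [← Real.dist_eq]; exact hIuτ
      calc |(F₁ u - (u - τ) * Iu) / (u - τ) + (Iu - Lτ)|
          ≤ |(F₁ u - (u - τ) * Iu) / (u - τ)| + |Iu - Lτ| := abs_add_le _ _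
        _ < ε/4 + ε/4 := add_lt_add_of_le_of_lt hterm1 hterm2
        _ < ε := by linarith
    -- combine the two derivatives
    have hsum := hd₁.add hd₂
    rw [hsplit]
    have hGτ : G τ = Lτ + mlam * (Real.exp (η * τ / 2) * Aτ τ) := by
      have e1 : G τ = ∫ x, (ht (τ, x) + (mlam * Real.exp (η * τ / 2)) * wτ x)
          ∂(ρ (Set.projIcc 0 T hT.le τ) : Measure ℝ) := rfl
      have hint3 : Integrable (fun x => ht (τ, x))
          (ρ (Set.projIcc 0 T hT.le τ) : Measure ℝ) :=
        integrableSlice hT.le ρ ht hhtc hhtcs τ (Set.projIcc 0 T hT.le τ)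
      have hint4 : Integrable (fun x => (mlam * Real.exp (η * τ / 2)) * wτ x)
          (ρ (Set.projIcc 0 T hT.le τ) : Measure ℝ) :=
        (hwτc.integrable_of_hasCompactSupport hwτcs).const_mul _
      rw [e1, integral_add hint3 hint4, integral_const_mul]
      rw [hLτdef, hAτdef]
      ring
    rw [hGτ]
    exact hsum
  -- fundamental theorem of calculus
  have hFTC : ∫ s in (0:ℝ)..(t₀ : ℝ), G s = F (t₀ : ℝ) - F 0 := by
    apply intervalIntegral.integral_eq_sub_of_hasDeriv_right_of_le t₀.2.1
      hFc.continuousOn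
    · intro s hs
      exact (hFderiv s ⟨hs.1, lt_of_lt_of_le hs.2 t₀.2.2⟩).hasDerivWithinAt
    · exact hGc.intervalIntegrable (μ := volume) 0 (t₀ : ℝ)
  -- endpoints
  have hFt₀ : F (t₀ : ℝ) = ∫ x, h ((t₀ : ℝ), x) ∂(ρ t₀ : Measure ℝ) := by
    rw [hFdef]
    simp only [Set.projIcc_of_mem hT.le t₀.2]
  have hF0 : F 0 = ∫ x, h (0, x) ∂(lam : Measure ℝ) := by
    rw [hFdef]
    simp only [Set.projIcc_left, hρ.2.1]
  rw [hFTC, hFt₀, hF0]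
end
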